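/- arXiv:math/0610498 — 4 statements merged into one kernel-verified Lean document; each statement's English description precedes it below -/
import Mathlib

section
/- Let A ∈ ℂ^{n×n} be Hermitian, let [X, X⊥] ∈ ℂ^{n×n} be unitary with X ∈ ℂ^{n×k}, suppose range(X) is A-invariant, and let Y ∈ ℂ^{n×k} have orthonormal columns. Set C := X^H Y, S := X⊥^H Y, A₁₁ := X^H A X, and A₂₂ := X⊥^H A X⊥. Then λ(X^H A X) − λ(Y^H A Y) ≺ [λ(A₁₁) − λ(C^H A₁₁ C)]^↓ + λ(−S^H A₂₂ S), where ≺ denotes (strong) majorization. -/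
open Matrix Finset

/-- The entries of `x` rearranged in nonincreasing (descending) order. -/
noncomputable def sortDown {k : ℕ} (x : Fin k → ℝ) : Fin k → ℝ :=
  fun i => x (Tuple.sort x i.rev)

/-- The eigenvalues of a Hermitian matrix arranged in nonincreasing order. -/
noncomputable def eigDown {k : ℕ} {M : Matrix (Fin k) (Fin k) ℂ} (hM : M.IsHermitian) :
    Fin k → ℝ :=
  sortDown hM.eigenvalues

/-- The singular values of `B` (square roots of the eigenvalues of `Bᴴ * B`),
arranged in nonincreasing order; there are as many as columns of `B`,
extra ones (beyond `min(#rows, #cols)`) being zero. -/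
noncomputable def singDown {R : Type*} [Fintype R] {k : ℕ} (B : Matrix R (Fin k) ℂ) :
    Fin k → ℝ :=
  sortDown fun i => Real.sqrt ((Matrix.isHermitian_conjTranspose_mul_self B).eigenvalues i)

/-- The spread of the spectrum of a Hermitian matrix: `λ_max - λ_min`. -/
noncomputable def sprA {R : Type*} [Fintype R] [DecidableEq R] {A : Matrix R R ℂ}
    (hA : A.IsHermitian) : ℝ :=
  sSup (Set.range hA.eigenvalues) - sInf (Set.range hA.eigenvalues)

/-- The spectral norm of `B`, i.e. its largest singular value. -/
noncomputable def specNorm {R : Type*} [Fintype R] {k : ℕ} (B : Matrix R (Fin k) ℂ) : ℝ :=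
  sSup (Set.range (singDown B))

/-- The principal angles between the ranges of `X` and `Y` (matrices with `k`
orthonormal columns), arranged in nonincreasing order: their cosines are the
singular values of `Xᴴ * Y` arranged in nondecreasing order. -/
noncomputable def principalAngles {R : Type*} [Fintype R] {k : ℕ}
    (X Y : Matrix R (Fin k) ℂ) : Fin k → ℝ :=
  fun i => Real.arccos (singDown (Xᴴ * Y) i.rev)

/-- The sum of the `j` largest entries of `x`. -/
noncomputable def psum {k : ℕ} (x : Fin k → ℝ) (j : ℕ) : ℝ :=
  ∑ i ∈ Finset.univ.filter fun i : Fin k => (i : ℕ) < j, sortDown x i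

/-- `x` is weakly (sub-)majorized by `y`: every partial sum of the `j` largest
entries of `x` is at most the corresponding partial sum for `y`. -/
def WeakMaj {k : ℕ} (x y : Fin k → ℝ) : Prop :=
  ∀ j : ℕ, psum x j ≤ psum y j

/-- `x` is (strongly) majorized by `y`. -/
def Maj {k : ℕ} (x y : Fin k → ℝ) : Prop :=
  WeakMaj x y ∧ ∑ i, x i = ∑ i, y i

/-- The range (column space) of `X` is an invariant subspace of `A`. -/
def InvariantRange {R : Type*} [Fintype R] {k : ℕ} (A : Matrix R R ℂ)
    (X : Matrix R (Fin k) ℂ) : Prop :=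
  ∀ u : Fin k → ℂ, ∃ w : Fin k → ℂ, A.mulVec (X.mulVec u) = X.mulVec w

namespace RitzAux

variable {k : ℕ}

/-- The permutation `τ` with `sortDown x = x ∘ τ`. -/
noncomputable def sortPerm (x : Fin k → ℝ) : Equiv.Perm (Fin k) :=
  (Fin.revPerm).trans (Tuple.sort x)

lemma sortDown_eq_comp (x : Fin k → ℝ) : sortDown x = x ∘ (sortPerm x) := rfl

lemma sum_sortDown (x : Fin k → ℝ) : ∑ i, sortDown x i = ∑ i, x i := by
  rw [sortDown_eq_comp]
  exact Equiv.sum_comp (sortPerm x) x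

lemma sortDown_antitone (x : Fin k → ℝ) : Antitone (sortDown x) := by
  intro i j hij
  exact Tuple.monotone_sort x (Fin.rev_le_rev.mpr hij)

lemma sortDown_of_antitone {g : Fin k → ℝ} (hg : Antitone g) : sortDown g = g := by
  have hmono : Monotone (g ∘ (Fin.revPerm : Equiv.Perm (Fin k))) := by
    intro a b hab
    exact hg (Fin.rev_le_rev.mpr hab)
  have h := (Tuple.comp_sort_eq_comp_iff_monotone (f := g)
      (σ := (Fin.revPerm : Equiv.Perm (Fin k)))).mpr hmono
  funext i
  have := congrFun h i.rev
  simpa [sortDown, Fin.rev_rev] using this.symm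

lemma psum_eq_sum_filter (x : Fin k → ℝ) (j : ℕ) :
    psum x j = ∑ i ∈ Finset.univ.filter fun i : Fin k => (i : ℕ) < j, sortDown x i := rfl

lemma psum_of_ge (x : Fin k → ℝ) {j : ℕ} (h : k ≤ j) : psum x j = ∑ i, x i := by
  rw [psum, ← sum_sortDown]
  congr 1
  rw [Finset.filter_true_of_mem]
  intro i _
  exact lt_of_lt_of_le i.2 h

lemma filter_lt_eq_image {j : ℕ} (hjk : j ≤ k) :
    (Finset.univ.filter fun i : Fin k => (i : ℕ) < j)
      = Finset.univ.image (Fin.castLE hjk) := by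
  ext i
  simp only [Finset.mem_filter, Finset.mem_univ, true_and, Finset.mem_image]
  constructor
  · intro h
    exact ⟨⟨(i : ℕ), h⟩, by simp [Fin.ext_iff]⟩
  · rintro ⟨l, rfl⟩
    exact l.2

lemma card_filter_lt {j : ℕ} (hjk : j ≤ k) :
    (Finset.univ.filter fun i : Fin k => (i : ℕ) < j).card = j := by
  rw [filter_lt_eq_image hjk,
    Finset.card_image_of_injective _ (Fin.strictMono_castLE hjk).injective]
  simp

lemma strictMono_le_apply {j : ℕ} {f : Fin j → Fin k} (hf : StrictMono f) (l : Fin j) :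
    (l : ℕ) ≤ (f l : ℕ) := by
  have hsub : (Finset.Iic l).image f ⊆ Finset.Iic (f l) := by
    intro a ha
    obtain ⟨m, hm, rfl⟩ := Finset.mem_image.mp ha
    exact Finset.mem_Iic.mpr (hf.monotone (Finset.mem_Iic.mp hm))
  have hcard := Finset.card_le_card hsub
  rw [Finset.card_image_of_injective _ hf.injective, Fin.card_Iic, Fin.card_Iic] at hcard
  omega

/-- Sum over any `j`-element set is at most the sum of the `j` smallest positions
of an antitone function. -/
lemma sum_le_sum_head {g : Fin k → ℝ} (hg : Antitone g) (s : Finset (Fin k)) :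
    ∑ i ∈ s, g i ≤ ∑ i ∈ Finset.univ.filter fun i : Fin k => (i : ℕ) < s.card, g i := by
  have hjk : s.card ≤ k := by
    simpa using Finset.card_le_card (Finset.subset_univ s)
  set j := s.card with hj
  have hemb := s.orderEmbOfFin hj.symm
  -- sum over s as sum over Fin j
  have h1 : ∑ i ∈ s, g i = ∑ l : Fin j, g (s.orderEmbOfFin hj.symm l) := by
    rw [← Finset.sum_image (f := g) (g := s.orderEmbOfFin hj.symm) (by
      intro a _ b _ hab; exact (s.orderEmbOfFin hj.symm).injective hab)]
    congr 1
    have := Finset.range_orderEmbOfFin s hj.symm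
    apply Finset.coe_injective
    rw [Finset.coe_image, Finset.coe_univ, Set.image_univ, this]
  have h2 : ∑ i ∈ Finset.univ.filter (fun i : Fin k => (i : ℕ) < j), g i
      = ∑ l : Fin j, g (Fin.castLE hjk l) := by
    rw [filter_lt_eq_image hjk, Finset.sum_image
      (by intro a _ b _ h; exact (Fin.strictMono_castLE hjk).injective h)]
  rw [h1, h2]
  apply Finset.sum_le_sum
  intro l _
  apply hg
  rw [Fin.le_def]
  simpa using strictMono_le_apply (s.orderEmbOfFin hj.symm).strictMono l

/-- Sum over any set is at most `psum` at the cardinality. -/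
lemma sum_le_psum (x : Fin k → ℝ) (s : Finset (Fin k)) :
    ∑ i ∈ s, x i ≤ psum x s.card := by
  classical
  set τ := sortPerm x
  have h1 : ∑ i ∈ s, x i = ∑ i ∈ s.image τ.symm, sortDown x i := by
    rw [Finset.sum_image (by intro a _ b _ h; exact τ.symm.injective h)]
    apply Finset.sum_congr rfl
    intro i _
    rw [sortDown_eq_comp]
    simp [τ]
  rw [h1, psum]
  have hcard : (s.image τ.symm).card = s.card :=
    Finset.card_image_of_injective _ τ.symm.injective
  rw [← hcard]
  exact sum_le_sum_head (sortDown_antitone x) _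

/-- `psum` is achieved by a set of the right cardinality (for `j ≤ k`). -/
lemma exists_psum_set (x : Fin k → ℝ) {j : ℕ} (hj : j ≤ k) :
    ∃ s : Finset (Fin k), s.card = j ∧ psum x j = ∑ i ∈ s, x i := by
  classical
  set τ := sortPerm x
  refine ⟨(Finset.univ.filter fun i : Fin k => (i : ℕ) < j).image τ, ?_, ?_⟩
  · rw [Finset.card_image_of_injective _ τ.injective]
    exact card_filter_lt hj
  · rw [psum, Finset.sum_image (by intro a _ b _ h; exact τ.injective h)]
    apply Finset.sum_congr rfl
    intro i _
    rw [sortDown_eq_comp]; rfl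

end RitzAux

namespace RitzAux

open RCLike

noncomputable def qf {k : ℕ} (M : Matrix (Fin k) (Fin k) ℂ) (x : EuclideanSpace ℂ (Fin k)) : ℝ :=
  RCLike.re ((star (x : Fin k → ℂ)) ⬝ᵥ (M *ᵥ (x : Fin k → ℂ)))

variable {k : ℕ}

lemma qf_eq_inner (M : Matrix (Fin k) (Fin k) ℂ) (x : EuclideanSpace ℂ (Fin k)) :
    qf M x = RCLike.re (inner (𝕜 := ℂ) x (Matrix.toEuclideanLin M x)) := by
  rw [EuclideanSpace.inner_eq_star_dotProduct, dotProduct_comm]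
  rfl

lemma qf_add (M N : Matrix (Fin k) (Fin k) ℂ) (x : EuclideanSpace ℂ (Fin k)) :
    qf (M + N) x = qf M x + qf N x := by
  simp [qf, Matrix.add_mulVec, dotProduct_add]

lemma qf_parseval {M : Matrix (Fin k) (Fin k) ℂ} (hM : M.IsHermitian)
    (x : EuclideanSpace ℂ (Fin k)) :
    qf M x = ∑ j, hM.eigenvalues j * ‖hM.eigenvectorBasis.repr x j‖ ^ 2 := by
  set b := hM.eigenvectorBasis
  have hsymm := (Matrix.isHermitian_iff_isSymmetric.1 hM)
  set T := Matrix.toEuclideanLin M with hT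
  have hrepr : ∀ j, b.repr (T x) j = (hM.eigenvalues j : ℂ) * b.repr x j := by
    intro j
    rw [b.repr_apply_apply, b.repr_apply_apply, ← hsymm (b j) x]
    have hTb : T (b j) = (hM.eigenvalues j : ℂ) • b j := by
      rw [hT, Matrix.toEuclideanLin_apply, hM.mulVec_eigenvectorBasis,
        RCLike.real_smul_eq_coe_smul (K := ℂ)]
      rfl
    rw [hTb, inner_smul_left, Complex.conj_ofReal]
  have hpars : inner (𝕜 := ℂ) x (T x) = ∑ j, (starRingEnd ℂ) (b.repr x j) * b.repr (T x) j := by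
    rw [← b.repr.inner_map_map x (T x)]
    rw [PiLp.inner_apply (𝕜 := ℂ) (b.repr x) (b.repr (T x))]
    exact Finset.sum_congr rfl fun j _ => by rw [RCLike.inner_apply]; ring
  rw [qf_eq_inner, hpars]
  rw [map_sum]
  apply Finset.sum_congr rfl
  intro j _
  rw [hrepr j]
  have : (starRingEnd ℂ) (b.repr x j) * ((hM.eigenvalues j : ℂ) * b.repr x j)
      = (hM.eigenvalues j : ℂ) * ((starRingEnd ℂ) (b.repr x j) * b.repr x j) := by ring
  rw [this, RCLike.conj_mul]
  simp [← Complex.ofReal_pow]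

lemma norm_sq_parseval (b : OrthonormalBasis (Fin k) ℂ (EuclideanSpace ℂ (Fin k)))
    (x : EuclideanSpace ℂ (Fin k)) :
    ‖x‖ ^ 2 = ∑ j, ‖b.repr x j‖ ^ 2 := by
  rw [← b.repr.norm_map x]
  rw [EuclideanSpace.norm_eq]
  rw [Real.sq_sqrt (by positivity)]

lemma repr_eq_zero_of_not_mem {b : OrthonormalBasis (Fin k) ℂ (EuclideanSpace ℂ (Fin k))}
    {J : Finset (Fin k)} {x : EuclideanSpace ℂ (Fin k)}
    (hx : x ∈ Submodule.span ℂ (b '' ↑J)) {j : Fin k} (hj : j ∉ J) :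
    b.repr x j = 0 := by
  rw [b.repr_apply_apply]
  induction hx using Submodule.span_induction with
  | mem y hy =>
      obtain ⟨l, hl, rfl⟩ := hy
      exact b.orthonormal.2 (fun h => hj (h ▸ hl))
  | zero => exact inner_zero_right _
  | add y z _ _ hy hz => rw [inner_add_right, hy, hz, add_zero]
  | smul c y _ hy => rw [inner_smul_right, hy, mul_zero]

end RitzAux

namespace RitzAux

variable {k : ℕ}

lemma qf_parseval_restrict {M : Matrix (Fin k) (Fin k) ℂ} (hM : M.IsHermitian)
    {J : Finset (Fin k)} {x : EuclideanSpace ℂ (Fin k)}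
    (hx : x ∈ Submodule.span ℂ (hM.eigenvectorBasis '' ↑J)) :
    qf M x = ∑ j ∈ J, hM.eigenvalues j * ‖hM.eigenvectorBasis.repr x j‖ ^ 2 := by
  rw [qf_parseval hM x]
  symm
  apply Finset.sum_subset (Finset.subset_univ J)
  intro j _ hj
  rw [repr_eq_zero_of_not_mem hx hj]
  simp

lemma norm_sq_parseval_restrict {b : OrthonormalBasis (Fin k) ℂ (EuclideanSpace ℂ (Fin k))}
    {J : Finset (Fin k)} {x : EuclideanSpace ℂ (Fin k)}
    (hx : x ∈ Submodule.span ℂ (b '' ↑J)) :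
    ‖x‖ ^ 2 = ∑ j ∈ J, ‖b.repr x j‖ ^ 2 := by
  rw [norm_sq_parseval b x]
  symm
  apply Finset.sum_subset (Finset.subset_univ J)
  intro j _ hj
  rw [repr_eq_zero_of_not_mem hx hj]
  simp

lemma qf_ge_of_mem_span {M : Matrix (Fin k) (Fin k) ℂ} (hM : M.IsHermitian)
    {J : Finset (Fin k)} {a : ℝ} (hJ : ∀ j ∈ J, a ≤ hM.eigenvalues j)
    {x : EuclideanSpace ℂ (Fin k)}
    (hx : x ∈ Submodule.span ℂ (hM.eigenvectorBasis '' ↑J)) :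
    a * ‖x‖ ^ 2 ≤ qf M x := by
  rw [qf_parseval_restrict hM hx, norm_sq_parseval_restrict hx, Finset.mul_sum]
  apply Finset.sum_le_sum
  intro j hj
  have : (0:ℝ) ≤ ‖hM.eigenvectorBasis.repr x j‖ ^ 2 := by positivity
  exact mul_le_mul_of_nonneg_right (hJ j hj) this

lemma qf_le_of_mem_span {M : Matrix (Fin k) (Fin k) ℂ} (hM : M.IsHermitian)
    {J : Finset (Fin k)} {a : ℝ} (hJ : ∀ j ∈ J, hM.eigenvalues j ≤ a)
    {x : EuclideanSpace ℂ (Fin k)}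
    (hx : x ∈ Submodule.span ℂ (hM.eigenvectorBasis '' ↑J)) :
    qf M x ≤ a * ‖x‖ ^ 2 := by
  rw [qf_parseval_restrict hM hx, norm_sq_parseval_restrict hx, Finset.mul_sum]
  apply Finset.sum_le_sum
  intro j hj
  have : (0:ℝ) ≤ ‖hM.eigenvectorBasis.repr x j‖ ^ 2 := by positivity
  exact mul_le_mul_of_nonneg_right (hJ j hj) this

lemma finrank_span_basis_image (b : OrthonormalBasis (Fin k) ℂ (EuclideanSpace ℂ (Fin k)))
    (J : Finset (Fin k)) :
    Module.finrank ℂ (Submodule.span ℂ (b '' ↑J)) = J.card := by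
  have hon : Orthonormal ℂ (fun x : (↑J : Set (Fin k)) => b x) :=
    b.orthonormal.comp _ Subtype.val_injective
  have hli := hon.linearIndependent
  have hrange : Set.range (fun x : (↑J : Set (Fin k)) => b x) = b '' ↑J := by
    rw [← Set.image_eq_range]
  rw [← hrange, finrank_span_eq_card hli]
  simp

end RitzAux

namespace RitzAux

variable {k : ℕ}

lemma sort_top (x : Fin k → ℝ) (i : Fin k) :
    ∃ J : Finset (Fin k), J.card = (i : ℕ) + 1 ∧ ∀ j ∈ J, sortDown x i ≤ x j := by
  classical
  refine ⟨(Finset.univ.filter fun m : Fin k => m ≤ i).image (sortPerm x), ?_, ?_⟩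
  · rw [Finset.card_image_of_injective _ (sortPerm x).injective]
    have : (Finset.univ.filter fun m : Fin k => m ≤ i) = Finset.Iic i := by
      ext m; simp
    rw [this, Fin.card_Iic]
  · intro j hj
    obtain ⟨m, hm, rfl⟩ := Finset.mem_image.mp hj
    have him : m ≤ i := by simpa using hm
    have h := sortDown_antitone x him
    rw [sortDown_eq_comp x] at h
    exact h

lemma sort_bot (x : Fin k → ℝ) (i : Fin k) :
    ∃ J : Finset (Fin k), J.card = k - (i : ℕ) ∧ ∀ j ∈ J, x j ≤ sortDown x i := by
  classical
  refine ⟨(Finset.univ.filter fun m : Fin k => i ≤ m).image (sortPerm x), ?_, ?_⟩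
  · rw [Finset.card_image_of_injective _ (sortPerm x).injective]
    have : (Finset.univ.filter fun m : Fin k => i ≤ m) = Finset.Ici i := by
      ext m; simp
    rw [this, Fin.card_Ici]
  · intro j hj
    obtain ⟨m, hm, rfl⟩ := Finset.mem_image.mp hj
    have him : i ≤ m := by simpa using hm
    have h := sortDown_antitone x him
    rw [sortDown_eq_comp x] at h
    exact h

end RitzAux

namespace RitzAux

variable {k : ℕ}

lemma eigDown_le_eigDown {M M' : Matrix (Fin k) (Fin k) ℂ}
    (hM : M.IsHermitian) (hM' : M'.IsHermitian) (c : ℝ)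
    (h : ∀ x : EuclideanSpace ℂ (Fin k), qf M x + c * ‖x‖ ^ 2 ≤ qf M' x) (i : Fin k) :
    eigDown hM i + c ≤ eigDown hM' i := by
  classical
  obtain ⟨J, hJcard, hJ⟩ := sort_top hM.eigenvalues i
  obtain ⟨J', hJ'card, hJ'⟩ := sort_bot hM'.eigenvalues i
  set V := Submodule.span ℂ (hM.eigenvectorBasis '' ↑J)
  set W := Submodule.span ℂ (hM'.eigenvectorBasis '' ↑J')
  have hV : Module.finrank ℂ V = (i : ℕ) + 1 := by
    rw [finrank_span_basis_image, hJcard]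
  have hW : Module.finrank ℂ W = k - (i : ℕ) := by
    rw [finrank_span_basis_image, hJ'card]
  -- intersection is nontrivial
  have hdim : Module.finrank ℂ (EuclideanSpace ℂ (Fin k)) = k := by simp
  have hsum := Submodule.finrank_sup_add_finrank_inf_eq V W
  have hle : Module.finrank ℂ ↥(V ⊔ W) ≤ k := by
    have := Submodule.finrank_le (V ⊔ W)
    rwa [hdim] at this
  have hpos : 0 < Module.finrank ℂ ↥(V ⊓ W) := by
    have hik : (i : ℕ) < k := i.2
    omega
  obtain ⟨x, hxVW, hx0⟩ := Submodule.exists_mem_ne_zero_of_ne_bot (p := V ⊓ W) (by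
    intro hbot
    rw [hbot] at hpos
    simp at hpos)
  have hxV : x ∈ V := hxVW.1
  have hxW : x ∈ W := hxVW.2
  have hnx : ‖x‖ ≠ 0 := norm_ne_zero_iff.mpr hx0
  have hnorm : (0:ℝ) < ‖x‖ ^ 2 := by positivity
  have h1 : eigDown hM i * ‖x‖ ^ 2 ≤ qf M x := qf_ge_of_mem_span hM hJ hxV
  have h2 : qf M' x ≤ eigDown hM' i * ‖x‖ ^ 2 := qf_le_of_mem_span hM' hJ' hxW
  have h3 := h x
  nlinarith [h1, h2, h3]

end RitzAux

namespace RitzAux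

variable {k : ℕ}

section conj

variable {N : Matrix (Fin k) (Fin k) ℂ} (hN : N.IsHermitian)

/-- Conjugation of a real diagonal by the eigenvector unitary of `N`. -/
noncomputable def conjDiag (f : Fin k → ℝ) : Matrix (Fin k) (Fin k) ℂ :=
  (hN.eigenvectorUnitary : Matrix (Fin k) (Fin k) ℂ) * Matrix.diagonal (fun j => (f j : ℂ))
    * (hN.eigenvectorUnitary : Matrix (Fin k) (Fin k) ℂ)ᴴ

lemma conjDiag_isHermitian (f : Fin k → ℝ) : (conjDiag hN f).IsHermitian := by
  unfold conjDiag
  unfold Matrix.IsHermitian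
  have hd : Matrix.diagonal (star fun j => ((f j : ℝ) : ℂ))
      = Matrix.diagonal (fun j => ((f j : ℝ) : ℂ)) := by
    ext i j
    by_cases h : i = j <;> simp [Matrix.diagonal_apply, h, Complex.conj_ofReal]
  rw [conjTranspose_mul, conjTranspose_mul, conjTranspose_conjTranspose,
    Matrix.diagonal_conjTranspose, hd, Matrix.mul_assoc]

lemma conjDiag_eigenvalues_eq : conjDiag hN hN.eigenvalues = N := by
  conv_rhs => rw [hN.spectral_theorem]
  rfl

lemma conjDiag_one : conjDiag hN (fun _ => (1:ℝ)) = 1 := by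
  unfold conjDiag
  have : Matrix.diagonal (fun _ : Fin k => ((1:ℝ) : ℂ)) = 1 := by
    simp [Matrix.diagonal_one]
  rw [this, Matrix.mul_one, ← Matrix.star_eq_conjTranspose]
  exact Matrix.mem_unitaryGroup_iff.mp hN.eigenvectorUnitary.2

lemma qf_conjDiag (f : Fin k → ℝ) (x : EuclideanSpace ℂ (Fin k)) :
    qf (conjDiag hN f) x
      = ∑ j, f j * Complex.normSq
          (((hN.eigenvectorUnitary : Matrix (Fin k) (Fin k) ℂ)ᴴ *ᵥ (x : Fin k → ℂ)) j) := by
  set U := (hN.eigenvectorUnitary : Matrix (Fin k) (Fin k) ℂ)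
  set y := Uᴴ *ᵥ (x : Fin k → ℂ) with hy
  have hsy : star (x : Fin k → ℂ) ᵥ* U = star y := by
    rw [hy, Matrix.star_mulVec, conjTranspose_conjTranspose]
  unfold conjDiag qf
  rw [← Matrix.mulVec_mulVec, ← Matrix.mulVec_mulVec, Matrix.dotProduct_mulVec, hsy]
  have : Matrix.diagonal (fun j => (f j : ℂ)) *ᵥ y = fun j => (f j : ℂ) * y j := by
    funext j
    rw [Matrix.mulVec_diagonal]
  rw [this]
  rw [dotProduct]
  rw [map_sum]
  apply Finset.sum_congr rfl
  intro j _
  simp only [Pi.star_apply]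
  have : star (y j) * ((f j : ℂ) * y j) = (f j : ℂ) * (star (y j) * y j) := by ring
  rw [this]
  rw [show star (y j) * y j = ((Complex.normSq (y j) : ℝ) : ℂ) by
    rw [Complex.star_def, Complex.normSq_eq_conj_mul_self]]
  rw [← Complex.ofReal_mul]
  simp

lemma qf_one (x : EuclideanSpace ℂ (Fin k)) : qf 1 x = ‖x‖ ^ 2 := by
  have h1 : qf 1 x = RCLike.re (inner (𝕜 := ℂ) x x) := by
    unfold qf
    rw [Matrix.one_mulVec, EuclideanSpace.inner_eq_star_dotProduct, dotProduct_comm]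
  rw [h1, inner_self_eq_norm_sq]

lemma re_trace_conjDiag (f : Fin k → ℝ) :
    RCLike.re (conjDiag hN f).trace = ∑ j, f j := by
  set U := (hN.eigenvectorUnitary : Matrix (Fin k) (Fin k) ℂ)
  unfold conjDiag
  rw [Matrix.trace_mul_cycle, ← Matrix.star_eq_conjTranspose,
    Unitary.coe_star_mul_self, Matrix.one_mul, Matrix.trace_diagonal]
  rw [map_sum]
  simp

lemma sum_eigenvalues_eq : ∑ j, hN.eigenvalues j = RCLike.re N.trace := by
  have h := re_trace_conjDiag hN hN.eigenvalues
  rw [conjDiag_eigenvalues_eq hN] at h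
  exact h.symm

end conj

end RitzAux

namespace RitzAux

variable {k : ℕ}

lemma psum_zero (x : Fin k → ℝ) : psum x 0 = 0 := by
  simp [psum]

lemma sum_max_sub (x : Fin k → ℝ) {j : ℕ} (hj1 : 1 ≤ j) (hjk : j ≤ k) (hpred : j - 1 < k) :
    ∑ i, max (x i - sortDown x ⟨j - 1, hpred⟩) 0
      = psum x j - j * sortDown x ⟨j - 1, hpred⟩ := by
  set c := sortDown x ⟨j - 1, hpred⟩ with hc
  have hperm : ∑ i, max (x i - c) 0 = ∑ i, max (sortDown x i - c) 0 := by
    rw [sortDown_eq_comp]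
    exact (Equiv.sum_comp (sortPerm x) (fun l => max (x l - c) 0)).symm
  rw [hperm]
  rw [← Finset.sum_filter_add_sum_filter_not Finset.univ (fun i : Fin k => (i : ℕ) < j)]
  have hA : ∑ i ∈ Finset.univ.filter (fun i : Fin k => (i : ℕ) < j), max (sortDown x i - c) 0
      = psum x j - j * c := by
    have h1 : ∀ i ∈ Finset.univ.filter (fun i : Fin k => (i : ℕ) < j),
        max (sortDown x i - c) 0 = sortDown x i - c := by
      intro i hi
      have hij : (i : ℕ) < j := by simpa using hi
      have hle : i ≤ (⟨j - 1, hpred⟩ : Fin k) := by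
        rw [Fin.le_def]; simpa using by omega
      have := sortDown_antitone x hle
      simp only [max_eq_left_iff]
      linarith
    rw [Finset.sum_congr rfl h1, Finset.sum_sub_distrib, Finset.sum_const,
      card_filter_lt hjk, psum]
    simp
  have hB : ∑ i ∈ Finset.univ.filter (fun i : Fin k => ¬ (i : ℕ) < j), max (sortDown x i - c) 0
      = 0 := by
    apply Finset.sum_eq_zero
    intro i hi
    have hij : ¬ (i : ℕ) < j := by simpa using hi
    have hge : (⟨j - 1, hpred⟩ : Fin k) ≤ i := by
      rw [Fin.le_def]; simpa using by omega
    have := sortDown_antitone x hge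
    simp only [max_eq_right_iff]
    linarith
  rw [hA, hB]
  ring

end RitzAux

namespace RitzAux

variable {k : ℕ}

lemma eigDown_sum {M : Matrix (Fin k) (Fin k) ℂ} (hM : M.IsHermitian) :
    ∑ i, eigDown hM i = RCLike.re M.trace := by
  rw [eigDown, sum_sortDown, sum_eigenvalues_eq hM]

lemma lidskii_inequality {P Q : Matrix (Fin k) (Fin k) ℂ} (hP : P.IsHermitian)
    (hQ : Q.IsHermitian) (hPQ : (P + Q).IsHermitian) (I : Finset (Fin k)) :
    ∑ i ∈ I, (eigDown hPQ i - eigDown hP i) ≤ psum hQ.eigenvalues I.card := by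
  classical
  rcases Nat.eq_zero_or_pos I.card with h0 | hpos
  · rw [h0, psum_zero, Finset.card_eq_zero.mp h0]
    simp
  · set j := I.card with hj
    have hjk : j ≤ k := by simpa using Finset.card_le_card (Finset.subset_univ I)
    have hpred : j - 1 < k := by omega
    set c := sortDown hQ.eigenvalues ⟨j - 1, hpred⟩ with hc
    set g : Fin k → ℝ := fun i => max (hQ.eigenvalues i - c) 0 with hg
    set R := conjDiag hQ g with hR
    have hRH : R.IsHermitian := conjDiag_isHermitian hQ g
    have hPR : (P + R).IsHermitian := hP.add hRH
    set U := (hQ.eigenvectorUnitary : Matrix (Fin k) (Fin k) ℂ) with hU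
    -- quadratic form facts
    have hqfacts : ∀ x : EuclideanSpace ℂ (Fin k),
        qf Q x - c * ‖x‖ ^ 2 ≤ qf R x ∧ 0 ≤ qf R x := by
      intro x
      set w : Fin k → ℝ := fun l => Complex.normSq ((Uᴴ *ᵥ (x : Fin k → ℂ)) l) with hw
      have hwpos : ∀ l, 0 ≤ w l := fun l => Complex.normSq_nonneg _
      have hqQ : qf Q x = ∑ l, hQ.eigenvalues l * w l := by
        conv_lhs => rw [← conjDiag_eigenvalues_eq hQ]
        exact qf_conjDiag hQ _ x
      have hqR : qf R x = ∑ l, g l * w l := qf_conjDiag hQ g x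
      have hnx : ‖x‖ ^ 2 = ∑ l, w l := by
        have h := qf_conjDiag hQ (fun _ => 1) x
        rw [conjDiag_one hQ, qf_one] at h
        simpa using h
      constructor
      · rw [hqQ, hqR, hnx, Finset.mul_sum, ← Finset.sum_sub_distrib]
        apply Finset.sum_le_sum
        intro l _
        have h1 : hQ.eigenvalues l * w l - c * w l = (hQ.eigenvalues l - c) * w l := by ring
        rw [h1]
        exact mul_le_mul_of_nonneg_right (le_max_left _ _) (hwpos l)
      · rw [hqR]
        apply Finset.sum_nonneg
        intro l _
        exact mul_nonneg (le_max_right _ _) (hwpos l)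
    have h1 : ∀ i, eigDown hPQ i ≤ eigDown hPR i + c := by
      intro i
      have h := eigDown_le_eigDown hPQ hPR (-c) (fun x => by
        rw [qf_add, qf_add]
        have := (hqfacts x).1
        nlinarith [this]) i
      linarith
    have h2 : ∀ i, eigDown hP i ≤ eigDown hPR i := by
      intro i
      have h := eigDown_le_eigDown hP hPR 0 (fun x => by
        rw [qf_add]
        have := (hqfacts x).2
        nlinarith [this]) i
      linarith
    have htr : ∑ i, (eigDown hPR i - eigDown hP i) = psum hQ.eigenvalues j - j * c := by
      rw [Finset.sum_sub_distrib, eigDown_sum hPR, eigDown_sum hP, Matrix.trace_add, map_add]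
      have : RCLike.re R.trace = ∑ l, g l := re_trace_conjDiag hQ g
      rw [hg] at this
      have hmax := sum_max_sub hQ.eigenvalues (by omega : 1 ≤ j) hjk hpred
      rw [← hc] at hmax
      rw [this, hmax]
      ring
    calc ∑ i ∈ I, (eigDown hPQ i - eigDown hP i)
        ≤ ∑ i ∈ I, (eigDown hPR i + c - eigDown hP i) := by
          apply Finset.sum_le_sum
          intro i _
          have := h1 i
          linarith
      _ = ∑ i ∈ I, (eigDown hPR i - eigDown hP i) + j * c := by
          have : ∀ i ∈ I, eigDown hPR i + c - eigDown hP i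
              = (eigDown hPR i - eigDown hP i) + c := by intros; ring
          rw [Finset.sum_congr rfl this, Finset.sum_add_distrib, Finset.sum_const, ← hj]
          simp [mul_comm]
      _ ≤ ∑ i, (eigDown hPR i - eigDown hP i) + j * c := by
          have hsub := Finset.sum_le_sum_of_subset_of_nonneg (Finset.subset_univ I)
            (fun i _ _ => by have := h2 i; linarith : ∀ i ∈ Finset.univ, i ∉ I →
              0 ≤ eigDown hPR i - eigDown hP i)
          linarith
      _ = psum hQ.eigenvalues j := by rw [htr]; ring

end RitzAux

namespace RitzAux

lemma Xp_A_X_eq_zero {n k m : ℕ}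
    (A : Matrix (Fin n) (Fin n) ℂ)
    (X : Matrix (Fin n) (Fin k) ℂ) (Xp : Matrix (Fin n) (Fin m) ℂ)
    (hXXp : Xᴴ * Xp = 0) (hInv : InvariantRange A X) :
    Xpᴴ * A * X = 0 := by
  have hXpX : Xpᴴ * X = 0 := by
    have := congrArg conjTranspose hXXp
    rwa [conjTranspose_mul, conjTranspose_conjTranspose, conjTranspose_zero] at this
  ext i u
  obtain ⟨w, hw⟩ := hInv (Pi.single u 1)
  have hcol : (Xpᴴ * A * X) *ᵥ Pi.single u 1 = 0 := by
    rw [← Matrix.mulVec_mulVec, ← Matrix.mulVec_mulVec, hw, Matrix.mulVec_mulVec, hXpX,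
      Matrix.zero_mulVec]
  have := congrFun hcol i
  rw [Matrix.mulVec_single] at this
  simpa using this

lemma decomposition {n k m : ℕ} (hn : n = k + m)
    (A : Matrix (Fin n) (Fin n) ℂ) (hA : A.IsHermitian)
    (X : Matrix (Fin n) (Fin k) ℂ) (Xp : Matrix (Fin n) (Fin m) ℂ)
    (hX : Xᴴ * X = 1) (hXp : Xpᴴ * Xp = 1) (hXXp : Xᴴ * Xp = 0)
    (hInv : InvariantRange A X)
    (Y : Matrix (Fin n) (Fin k) ℂ) :
    Yᴴ * A * Y = (Xᴴ * Y)ᴴ * (Xᴴ * A * X) * (Xᴴ * Y)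
      + (Xpᴴ * Y)ᴴ * (Xpᴴ * A * Xp) * (Xpᴴ * Y) := by
  have hXpX : Xpᴴ * X = 0 := by
    have := congrArg conjTranspose hXXp
    rwa [conjTranspose_mul, conjTranspose_conjTranspose, conjTranspose_zero] at this
  have hz1 : Xpᴴ * A * X = 0 := Xp_A_X_eq_zero A X Xp hXXp hInv
  have hz2 : Xᴴ * A * Xp = 0 := by
    have := congrArg conjTranspose hz1
    rwa [conjTranspose_mul, conjTranspose_mul, conjTranspose_conjTranspose,
      hA.eq, conjTranspose_zero, ← Matrix.mul_assoc] at this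
  -- resolution of identity
  have hone : X * Xᴴ + Xp * Xpᴴ = 1 := by
    have hsq : fromRows Xᴴ Xpᴴ * fromCols X Xp = 1 := by
      rw [fromRows_mul_fromCols, hX, hXp, hXXp, hXpX, ← Matrix.fromBlocks_one]
    have e : Fin n ≃ Fin k ⊕ Fin m := (finCongr hn).trans finSumFinEquiv.symm
    have hcomm := (fromCols_mul_fromRows_eq_one_comm e X Xp Xᴴ Xpᴴ).mpr hsq
    rwa [fromCols_mul_fromRows] at hcomm
  have hexpand : A = X * (Xᴴ * A * X) * Xᴴ + Xp * (Xpᴴ * A * Xp) * Xpᴴ := by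
    calc A = 1 * A * 1 := by rw [Matrix.one_mul, Matrix.mul_one]
      _ = (X * Xᴴ + Xp * Xpᴴ) * A * (X * Xᴴ + Xp * Xpᴴ) := by rw [hone]
      _ = X * (Xᴴ * A * X) * Xᴴ + X * (Xᴴ * A * Xp) * Xpᴴ
          + (Xp * (Xpᴴ * A * X) * Xᴴ + Xp * (Xpᴴ * A * Xp) * Xpᴴ) := by
          simp only [Matrix.add_mul, Matrix.mul_add, Matrix.mul_assoc]
          abel
      _ = X * (Xᴴ * A * X) * Xᴴ + Xp * (Xpᴴ * A * Xp) * Xpᴴ := by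
          rw [hz1, hz2]
          simp
  conv_lhs => rw [hexpand]
  simp only [Matrix.mul_add, Matrix.add_mul, conjTranspose_mul, conjTranspose_conjTranspose]
  simp only [Matrix.mul_assoc]

end RitzAux

namespace RitzAux

variable {k : ℕ}

lemma eigDown_congr {M M' : Matrix (Fin k) (Fin k) ℂ} (h : M = M')
    (hM : M.IsHermitian) (hM' : M'.IsHermitian) : eigDown hM = eigDown hM' := by
  subst h
  rfl

lemma psum_antitone_add (d : Fin k → ℝ) {e' : Fin k → ℝ} (he : Antitone e') (j : ℕ) :
    psum (fun i => sortDown d i + e' i) j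
      = psum d j + ∑ i ∈ Finset.univ.filter (fun i : Fin k => (i : ℕ) < j), e' i := by
  have hanti : Antitone (fun i => sortDown d i + e' i) := by
    intro a b hab
    exact add_le_add (sortDown_antitone d hab) (he hab)
  rw [psum, sortDown_of_antitone hanti, Finset.sum_add_distrib, psum]

lemma eigDown_antitone {M : Matrix (Fin k) (Fin k) ℂ} (hM : M.IsHermitian) :
    Antitone (eigDown hM) := sortDown_antitone _

end RitzAux

open RitzAux


/-- With `[X, X⊥]` unitary, `range X` being `A`-invariant,
`C = Xᴴ Y`, `S = X⊥ᴴ Y`, `A₁₁ = Xᴴ A X`, and `A₂₂ = X⊥ᴴ A X⊥`, the difference of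
Ritz value vectors is (strongly) majorized by
`[λ(A₁₁) - λ(Cᴴ A₁₁ C)]^↓ + λ(-Sᴴ A₂₂ S)`. -/

theorem ritz_error_lidskii_step
    {n k m : ℕ} (hn : n = k + m)
    (A : Matrix (Fin n) (Fin n) ℂ) (hA : A.IsHermitian)
    (X : Matrix (Fin n) (Fin k) ℂ) (Xp : Matrix (Fin n) (Fin m) ℂ)
    (hX : Xᴴ * X = 1) (hXp : Xpᴴ * Xp = 1) (hXXp : Xᴴ * Xp = 0)
    (hInv : InvariantRange A X)
    (Y : Matrix (Fin n) (Fin k) ℂ) (hY : Yᴴ * Y = 1) :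
    Maj
      (fun i => eigDown (Matrix.isHermitian_conjTranspose_mul_mul X hA) i
                  - eigDown (Matrix.isHermitian_conjTranspose_mul_mul Y hA) i)
      (fun i =>
        sortDown (fun j => eigDown (Matrix.isHermitian_conjTranspose_mul_mul X hA) j
          - eigDown (Matrix.isHermitian_conjTranspose_mul_mul (Xᴴ * Y)
              (Matrix.isHermitian_conjTranspose_mul_mul X hA)) j) i
        + eigDown ((Matrix.isHermitian_conjTranspose_mul_mul (Xpᴴ * Y)
            (Matrix.isHermitian_conjTranspose_mul_mul Xp hA)).neg) i) := by
  classical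
  have hA11 := Matrix.isHermitian_conjTranspose_mul_mul X hA
  have hYAY := Matrix.isHermitian_conjTranspose_mul_mul Y hA
  have hM := Matrix.isHermitian_conjTranspose_mul_mul (Xᴴ * Y) hA11
  have hA22 := Matrix.isHermitian_conjTranspose_mul_mul Xp hA
  have hN := Matrix.isHermitian_conjTranspose_mul_mul (Xpᴴ * Y) hA22
  have hNeg := hN.neg
  set Mmat := (Xᴴ * Y)ᴴ * (Xᴴ * A * X) * (Xᴴ * Y) with hMmat
  set Nmat := (Xpᴴ * Y)ᴴ * (Xpᴴ * A * Xp) * (Xpᴴ * Y) with hNmat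
  have hdecomp : Yᴴ * A * Y = Mmat + Nmat :=
    decomposition hn A hA X Xp hX hXp hXXp hInv Y
  set d : Fin k → ℝ := fun i => eigDown hA11 i - eigDown hM i with hd
  set e : Fin k → ℝ := fun i => eigDown hM i - eigDown hYAY i with he
  -- Lidskii: for any index set I, ∑_{i ∈ I} e i ≤ psum (hNeg.eigenvalues) I.card
  have hPQeq : Yᴴ * A * Y + -Nmat = Mmat := by
    rw [hdecomp]
    abel
  have hPQ : (Yᴴ * A * Y + -Nmat).IsHermitian := by
    rw [hPQeq]; exact hM
  have hlid : ∀ I : Finset (Fin k), ∑ i ∈ I, e i ≤ psum hNeg.eigenvalues I.card := by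
    intro I
    have h := lidskii_inequality hYAY hNeg hPQ I
    have hcongr := eigDown_congr hPQeq hPQ hM
    calc ∑ i ∈ I, e i = ∑ i ∈ I, (eigDown hPQ i - eigDown hYAY i) := by
          apply Finset.sum_congr rfl
          intro i _
          rw [he, hcongr]
      _ ≤ psum hNeg.eigenvalues I.card := h
  -- total sums
  have hesum : ∑ i, e i = ∑ i, eigDown hNeg i := by
    rw [he]
    rw [Finset.sum_sub_distrib, eigDown_sum hM, eigDown_sum hYAY, eigDown_sum hNeg]
    have htr : (Yᴴ * A * Y).trace = Mmat.trace + Nmat.trace := by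
      rw [hdecomp, Matrix.trace_add]
    rw [htr, Matrix.trace_neg, map_add, map_neg]
    ring
  have hLfun : (fun i => eigDown hA11 i - eigDown hYAY i) = fun i => d i + e i := by
    funext i
    rw [hd, he]
    ring
  have hRHS : ∀ j : ℕ, psum (fun i => sortDown d i + eigDown hNeg i) j
      = psum d j + psum hNeg.eigenvalues j := by
    intro j
    rw [psum_antitone_add d (eigDown_antitone hNeg) j]
    rfl
  have hsumeq : ∑ i, (d i + e i) = ∑ i, (sortDown d i + eigDown hNeg i) := by
    rw [Finset.sum_add_distrib, Finset.sum_add_distrib, sum_sortDown, hesum]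
  have hmain : Maj (fun i => d i + e i) (fun i => sortDown d i + eigDown hNeg i) := by
    constructor
    · intro j
      rcases le_or_gt k j with hj | hj
      · rw [psum_of_ge _ hj, psum_of_ge _ hj, hsumeq]
      · obtain ⟨S, hScard, hSeq⟩ := exists_psum_set (fun i => d i + e i) hj.le
        rw [hSeq, Finset.sum_add_distrib, hRHS j]
        have h1 : ∑ i ∈ S, d i ≤ psum d j := by
          have := sum_le_psum d S
          rwa [hScard] at this
        have h2 : ∑ i ∈ S, e i ≤ psum hNeg.eigenvalues j := by
          have := hlid S
          rwa [hScard] at this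
        linarith
    · exact hsumeq
  rw [hLfun]
  exact hmain
end

section
/- Let A ∈ ℂ^{n×n} be Hermitian, let [X, X⊥] ∈ ℂ^{n×n} be unitary with X ∈ ℂ^{n×k}, and let Y ∈ ℂ^{n×k} have orthonormal columns; set 𝒳 = range(X), 𝒴 = range(Y), S := X⊥^H Y, and A₂₂ := X⊥^H A X⊥. Then the vector |λ(−S^H A₂₂ S)| arranged in nonincreasing order equals s(S^H A₂₂ S), and s(S^H A₂₂ S) ≺_w ‖A₂₂‖ · sin²θ(𝒳,𝒴). -/
open Matrix Finset

open Polynomial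
section SortTools

variable {k : ℕ}

/-- the permutation such that `sortDown x = x ∘ π x` -/
noncomputable def sdperm {k : ℕ} (x : Fin k → ℝ) : Equiv.Perm (Fin k) :=
  (Fin.revPerm).trans (Tuple.sort x)

lemma sortDown_eq_comp (x : Fin k → ℝ) : sortDown x = x ∘ ⇑(sdperm x) := rfl

lemma mset_comp_perm (x : Fin k → ℝ) (σ : Equiv.Perm (Fin k)) :
    Multiset.map (x ∘ ⇑σ) Finset.univ.val = Multiset.map x Finset.univ.val := by
  rw [← Multiset.map_map]
  congr 1
  have := congrArg Finset.val (Finset.map_univ_equiv σ)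
  simpa [Finset.map] using this

lemma mset_sortDown (x : Fin k → ℝ) :
    Multiset.map (sortDown x) Finset.univ.val = Multiset.map x Finset.univ.val := by
  rw [sortDown_eq_comp]; exact mset_comp_perm x _

lemma mono_unique {u v : Fin k → ℝ} (hu : Monotone u) (hv : Monotone v)
    (h : Multiset.map u Finset.univ.val = Multiset.map v Finset.univ.val) : u = v := by
  apply List.ofFn_injective
  apply List.Perm.eq_of_sortedLE hu.sortedLE_ofFn hv.sortedLE_ofFn
  have h' : (List.ofFn u : Multiset ℝ) = (List.ofFn v : Multiset ℝ) := by
    rw [← Fin.univ_val_map, ← Fin.univ_val_map]; exact h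
  exact Quotient.exact h'

lemma monotone_sortUp (x : Fin k → ℝ) : Monotone (x ∘ ⇑(Tuple.sort x)) :=
  Tuple.monotone_sort x

lemma sortDown_apply_rev (x : Fin k → ℝ) (i : Fin k) :
    sortDown x i = (x ∘ ⇑(Tuple.sort x)) i.rev := rfl

lemma antitone_sortDown (x : Fin k → ℝ) : Antitone (sortDown x) := by
  intro i j hij
  rw [sortDown_apply_rev, sortDown_apply_rev]
  exact monotone_sortUp x (Fin.rev_le_rev.mpr hij)

lemma sortDown_congr {x y : Fin k → ℝ}
    (h : Multiset.map x Finset.univ.val = Multiset.map y Finset.univ.val) :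
    sortDown x = sortDown y := by
  have : x ∘ ⇑(Tuple.sort x) = y ∘ ⇑(Tuple.sort y) := by
    apply mono_unique (monotone_sortUp x) (monotone_sortUp y)
    rw [mset_comp_perm, mset_comp_perm]; exact h
  funext i
  rw [sortDown_apply_rev, sortDown_apply_rev, this]

lemma sortDown_perm (x : Fin k → ℝ) (σ : Equiv.Perm (Fin k)) :
    sortDown (x ∘ ⇑σ) = sortDown x :=
  sortDown_congr (mset_comp_perm x σ)

lemma sortDown_comp_mono {f : ℝ → ℝ} (hf : Monotone f) (x : Fin k → ℝ) :
    sortDown (f ∘ x) = f ∘ sortDown x := by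
  have : (f ∘ x) ∘ ⇑(Tuple.sort (f ∘ x)) = f ∘ (x ∘ ⇑(Tuple.sort x)) := by
    apply mono_unique (monotone_sortUp _) (hf.comp (monotone_sortUp x))
    rw [mset_comp_perm]
    rw [show f ∘ (x ∘ ⇑(Tuple.sort x)) = (f ∘ x) ∘ ⇑(Tuple.sort x) from rfl, mset_comp_perm]
  funext i
  rw [sortDown_apply_rev]
  exact congrFun this i.rev

lemma sortDown_comp_anti {g : ℝ → ℝ} (hg : Antitone g) (x : Fin k → ℝ) :
    sortDown (g ∘ x) = fun i => g (sortDown x i.rev) := by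
  have h1 : Monotone (g ∘ sortDown x) := hg.comp (antitone_sortDown x)
  have : (g ∘ x) ∘ ⇑(Tuple.sort (g ∘ x)) = g ∘ sortDown x := by
    apply mono_unique (monotone_sortUp _) h1
    rw [mset_comp_perm]
    rw [show g ∘ sortDown x = (g ∘ x) ∘ ⇑(sdperm x) from rfl, mset_comp_perm]
  funext i
  rw [sortDown_apply_rev]
  exact congrFun this i.rev

lemma sortDown_eq_self_of_antitone {x : Fin k → ℝ} (hx : Antitone x) : sortDown x = x := by
  have h1 : Monotone (x ∘ ⇑(Fin.revPerm : Equiv.Perm (Fin k))) := by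
    intro i j hij
    exact hx (by simpa using Fin.rev_le_rev.mpr hij)
  have := Tuple.unique_monotone (f := x) (σ := Tuple.sort x) (τ := Fin.revPerm)
    (monotone_sortUp x) h1
  funext i
  rw [sortDown_apply_rev]
  have := congrFun this i.rev
  simpa using this

lemma sortDown_idem (x : Fin k → ℝ) : sortDown (sortDown x) = sortDown x :=
  sortDown_eq_self_of_antitone (antitone_sortDown x)

lemma sortDown_mem_range (x : Fin k → ℝ) (i : Fin k) : sortDown x i ∈ Set.range x :=
  ⟨_, rfl⟩

lemma range_sortDown (x : Fin k → ℝ) : Set.range (sortDown x) = Set.range x := by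
  rw [sortDown_eq_comp, Set.range_comp]
  simp [Set.range_eq_univ.mpr (sdperm x).surjective]

end SortTools

section Charpoly

variable {m : ℕ}

lemma charpoly_diagonal (d : Fin m → ℂ) :
    (Matrix.diagonal d).charpoly = ∏ i, (X - C (d i)) := by
  unfold Matrix.charpoly
  have h : charmatrix (Matrix.diagonal d) = Matrix.diagonal (fun i => (X : ℂ[X]) - C (d i)) := by
    ext i j
    by_cases hij : i = j
    · subst hij; simp [charmatrix_apply_eq]
    · simp [charmatrix_apply_ne _ _ _ hij, Matrix.diagonal_apply_ne _ hij]
  rw [h, Matrix.det_diagonal]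

lemma charpoly_unitary_conj (U B : Matrix (Fin m) (Fin m) ℂ)
    (h1 : U * Uᴴ = 1) (h2 : Uᴴ * U = 1) :
    (U * B * Uᴴ).charpoly = B.charpoly := by
  unfold Matrix.charpoly
  have key : charmatrix (U * B * Uᴴ) =
      U.map C * charmatrix B * (Uᴴ).map C := by
    show Matrix.scalar _ X - (U * B * Uᴴ).map C = _
    show _ = U.map C * (Matrix.scalar _ X - B.map C) * (Uᴴ).map C
    rw [Matrix.mul_sub, Matrix.sub_mul]
    congr 1
    · -- scalar X = U.map C * scalar X * Uᴴ.map C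
      have comm : U.map (C : ℂ →+* ℂ[X]) * Matrix.scalar (Fin m) X
          = Matrix.scalar (Fin m) X * U.map (C : ℂ →+* ℂ[X]) :=
        (Matrix.scalar_commute X (fun r => (Commute.all X r)) (U.map C)).symm
      rw [comm, Matrix.mul_assoc, ← Matrix.map_mul, h1]
      simp
    · rw [← Matrix.map_mul, ← Matrix.map_mul]
  rw [key, Matrix.det_mul, Matrix.det_mul]
  have : (U.map C).det * ((Uᴴ).map C).det = 1 := by
    rw [← Matrix.det_mul, ← Matrix.map_mul, h1]
    simp
  calc (U.map C).det * (charmatrix B).det * ((Uᴴ).map C).det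
      = (charmatrix B).det * ((U.map C).det * ((Uᴴ).map C).det) := by ring
    _ = (charmatrix B).det := by rw [this, mul_one]

end Charpoly

section EigMset

variable {m : ℕ}

lemma eig_mset_of_diag {N : Matrix (Fin m) (Fin m) ℂ} (hN : N.IsHermitian)
    (U : Matrix (Fin m) (Fin m) ℂ) (h1 : U * Uᴴ = 1) (h2 : Uᴴ * U = 1) (d : Fin m → ℝ)
    (h : N = U * Matrix.diagonal (fun i => (d i : ℂ)) * Uᴴ) :
    Multiset.map hN.eigenvalues Finset.univ.val = Multiset.map d Finset.univ.val := by
  have hV1 : (hN.eigenvectorUnitary : Matrix (Fin m) (Fin m) ℂ) *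
      (hN.eigenvectorUnitary : Matrix (Fin m) (Fin m) ℂ)ᴴ = 1 := by
    rw [← Matrix.star_eq_conjTranspose]
    exact (Unitary.mem_iff.mp hN.eigenvectorUnitary.2).2
  have hV2 : (hN.eigenvectorUnitary : Matrix (Fin m) (Fin m) ℂ)ᴴ *
      (hN.eigenvectorUnitary : Matrix (Fin m) (Fin m) ℂ) = 1 := by
    rw [← Matrix.star_eq_conjTranspose]
    exact (Unitary.mem_iff.mp hN.eigenvectorUnitary.2).1
  have hc1 : N.charpoly = ∏ i, (X - C ((hN.eigenvalues i : ℂ))) := by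
    conv_lhs => rw [hN.spectral_theorem, Unitary.conjStarAlgAut_apply]
    rw [show (star (hN.eigenvectorUnitary : Matrix (Fin m) (Fin m) ℂ)) =
      (hN.eigenvectorUnitary : Matrix (Fin m) (Fin m) ℂ)ᴴ from Matrix.star_eq_conjTranspose _]
    rw [charpoly_unitary_conj _ _ hV1 hV2]
    exact _root_.charpoly_diagonal _
  have hc2 : N.charpoly = ∏ i, (X - C ((d i : ℂ))) := by
    conv_lhs => rw [h]
    rw [charpoly_unitary_conj _ _ h1 h2]
    exact _root_.charpoly_diagonal _
  have key : Multiset.map (fun i => (hN.eigenvalues i : ℂ)) Finset.univ.val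
      = Multiset.map (fun i => (d i : ℂ)) Finset.univ.val := by
    have r1 := congrArg Polynomial.roots hc1
    have r2 := congrArg Polynomial.roots hc2
    have e1 : (∏ i, (X - C ((hN.eigenvalues i : ℂ)))).roots
        = Multiset.map (fun i => (hN.eigenvalues i : ℂ)) Finset.univ.val := by
      rw [Finset.prod_eq_multiset_prod]
      rw [show Multiset.map (fun i => X - C ((hN.eigenvalues i : ℂ))) Finset.univ.val
        = Multiset.map (fun a => X - C a)
          (Multiset.map (fun i => (hN.eigenvalues i : ℂ)) Finset.univ.val) by
        rw [Multiset.map_map]; rfl]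
      exact roots_multiset_prod_X_sub_C _
    have e2 : (∏ i, (X - C ((d i : ℂ)))).roots
        = Multiset.map (fun i => (d i : ℂ)) Finset.univ.val := by
      rw [Finset.prod_eq_multiset_prod]
      rw [show Multiset.map (fun i => X - C ((d i : ℂ))) Finset.univ.val
        = Multiset.map (fun a => X - C a)
          (Multiset.map (fun i => (d i : ℂ)) Finset.univ.val) by
        rw [Multiset.map_map]; rfl]
      exact roots_multiset_prod_X_sub_C _
    rw [← e1, ← e2, ← hc1, ← hc2]
  have := congrArg (Multiset.map Complex.re) key
  rw [Multiset.map_map, Multiset.map_map] at this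
  simpa using this

end EigMset

section Applications

variable {q : ℕ}

lemma eigU_mul_star {N : Matrix (Fin q) (Fin q) ℂ} (hN : N.IsHermitian) :
    (hN.eigenvectorUnitary : Matrix (Fin q) (Fin q) ℂ) *
      (hN.eigenvectorUnitary : Matrix (Fin q) (Fin q) ℂ)ᴴ = 1 := by
  rw [← Matrix.star_eq_conjTranspose]
  exact (Unitary.mem_iff.mp hN.eigenvectorUnitary.2).2

lemma star_mul_eigU {N : Matrix (Fin q) (Fin q) ℂ} (hN : N.IsHermitian) :
    (hN.eigenvectorUnitary : Matrix (Fin q) (Fin q) ℂ)ᴴ *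
      (hN.eigenvectorUnitary : Matrix (Fin q) (Fin q) ℂ) = 1 := by
  rw [← Matrix.star_eq_conjTranspose]
  exact (Unitary.mem_iff.mp hN.eigenvectorUnitary.2).1

lemma spectral' {N : Matrix (Fin q) (Fin q) ℂ} (hN : N.IsHermitian) :
    N = (hN.eigenvectorUnitary : Matrix (Fin q) (Fin q) ℂ) *
      Matrix.diagonal (fun i => (hN.eigenvalues i : ℂ)) *
      (hN.eigenvectorUnitary : Matrix (Fin q) (Fin q) ℂ)ᴴ := by
  conv_lhs => rw [hN.spectral_theorem]
  rw [← Matrix.star_eq_conjTranspose]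
  rfl

lemma eig_mset_neg {M : Matrix (Fin q) (Fin q) ℂ} (hM : M.IsHermitian)
    (h' : (-M).IsHermitian) :
    Multiset.map h'.eigenvalues Finset.univ.val
      = Multiset.map (fun i => -hM.eigenvalues i) Finset.univ.val := by
  apply eig_mset_of_diag h' _ (eigU_mul_star hM) (star_mul_eigU hM)
  conv_lhs => rw [spectral' hM]
  rw [← Matrix.neg_mul, ← Matrix.mul_neg]
  congr 2
  ext i j; by_cases h : i = j <;> simp [h]

lemma eig_mset_sq {M : Matrix (Fin q) (Fin q) ℂ} (hM : M.IsHermitian)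
    (h' : (Mᴴ * M).IsHermitian) :
    Multiset.map h'.eigenvalues Finset.univ.val
      = Multiset.map (fun i => hM.eigenvalues i ^ 2) Finset.univ.val := by
  apply eig_mset_of_diag h' _ (eigU_mul_star hM) (star_mul_eigU hM)
  rw [hM.eq]
  conv_lhs => rw [spectral' hM]
  have : Matrix.diagonal (fun i => ((hM.eigenvalues i ^ 2 : ℝ) : ℂ))
      = Matrix.diagonal (fun i => (hM.eigenvalues i : ℂ)) *
        Matrix.diagonal (fun i => (hM.eigenvalues i : ℂ)) := by
    rw [Matrix.diagonal_mul_diagonal]; ext i j; by_cases h : i = j <;> simp [h, sq]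
  rw [this]
  set V := (hM.eigenvectorUnitary : Matrix (Fin q) (Fin q) ℂ)
  set D := Matrix.diagonal (fun i => (hM.eigenvalues i : ℂ))
  calc V * D * Vᴴ * (V * D * Vᴴ) = V * (D * ((Vᴴ * V) * D)) * Vᴴ := by
        simp only [Matrix.mul_assoc]
    _ = V * (D * D) * Vᴴ := by rw [star_mul_eigU hM, Matrix.one_mul]

lemma eig_mset_one_sub {N' : Matrix (Fin q) (Fin q) ℂ} (h2 : N'.IsHermitian)
    (h1 : (1 - N').IsHermitian) :
    Multiset.map h1.eigenvalues Finset.univ.val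
      = Multiset.map (fun i => 1 - h2.eigenvalues i) Finset.univ.val := by
  apply eig_mset_of_diag h1 _ (eigU_mul_star h2) (star_mul_eigU h2)
  conv_lhs => rw [spectral' h2]
  have : Matrix.diagonal (fun i => ((1 - h2.eigenvalues i : ℝ) : ℂ))
      = 1 - Matrix.diagonal (fun i => (h2.eigenvalues i : ℂ)) := by
    ext i j; by_cases h : i = j <;> simp [h, Matrix.one_apply]
  rw [this]
  set V := (h2.eigenvectorUnitary : Matrix (Fin q) (Fin q) ℂ)
  set D := Matrix.diagonal (fun i => (h2.eigenvalues i : ℂ))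
  rw [Matrix.mul_sub, Matrix.mul_one, Matrix.sub_mul, eigU_mul_star h2]

lemma singDown_hermitian {M : Matrix (Fin q) (Fin q) ℂ} (hM : M.IsHermitian) :
    singDown M = sortDown (fun i => |hM.eigenvalues i|) := by
  unfold singDown
  apply sortDown_congr
  rw [show (fun i => Real.sqrt ((Matrix.isHermitian_conjTranspose_mul_self M).eigenvalues i))
    = Real.sqrt ∘ (Matrix.isHermitian_conjTranspose_mul_self M).eigenvalues from rfl]
  rw [← Multiset.map_map, eig_mset_sq hM, Multiset.map_map]
  congr 1
  funext i
  exact Real.sqrt_sq_eq_abs _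

lemma range_eq_of_mset {x y : Fin q → ℝ}
    (h : Multiset.map x Finset.univ.val = Multiset.map y Finset.univ.val) :
    Set.range x = Set.range y := by
  ext a
  constructor
  · rintro ⟨i, rfl⟩
    have : x i ∈ Multiset.map y Finset.univ.val := by
      rw [← h]; exact Multiset.mem_map_of_mem _ (Finset.mem_univ i)
    obtain ⟨j, _, hj⟩ := Multiset.mem_map.mp this
    exact ⟨j, hj⟩
  · rintro ⟨i, rfl⟩
    have : y i ∈ Multiset.map x Finset.univ.val := by
      rw [h]; exact Multiset.mem_map_of_mem _ (Finset.mem_univ i)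
    obtain ⟨j, _, hj⟩ := Multiset.mem_map.mp this
    exact ⟨j, hj⟩

lemma abs_eig_le_specNorm {M : Matrix (Fin q) (Fin q) ℂ} (hM : M.IsHermitian) (l : Fin q) :
    |hM.eigenvalues l| ≤ specNorm M := by
  apply le_csSup (Set.Finite.bddAbove (Set.finite_range _))
  rw [singDown_hermitian hM, range_sortDown]
  exact ⟨l, rfl⟩

lemma specNorm_nonneg {R : Type*} [Fintype R] {j : ℕ} (B : Matrix R (Fin j) ℂ) :
    0 ≤ specNorm B := by
  apply Real.sSup_nonneg
  rintro x ⟨i, rfl⟩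
  have : singDown B i ∈ Set.range fun l =>
      Real.sqrt ((Matrix.isHermitian_conjTranspose_mul_self B).eigenvalues l) :=
    sortDown_mem_range _ i
  obtain ⟨l, hl⟩ := this
  rw [← hl]
  exact Real.sqrt_nonneg _

end Applications
section Quad

variable {q : ℕ}

lemma dot_self_eq (x : Fin q → ℂ) :
    star x ⬝ᵥ x = ((∑ l, Complex.normSq (x l) : ℝ) : ℂ) := by
  push_cast
  simp only [dotProduct, Pi.star_apply]
  congr 1; funext l
  rw [Complex.normSq_eq_conj_mul_self]; rfl

lemma dot_shift {r : ℕ} (U : Matrix (Fin q) (Fin r) ℂ) (x : Fin q → ℂ) (w : Fin r → ℂ) :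
    star x ⬝ᵥ (U *ᵥ w) = star (Uᴴ *ᵥ x) ⬝ᵥ w := by
  rw [Matrix.star_mulVec, Matrix.conjTranspose_conjTranspose, Matrix.dotProduct_mulVec]

lemma quad_diag (d : Fin q → ℝ) (U : Matrix (Fin q) (Fin q) ℂ) (x : Fin q → ℂ) :
    star x ⬝ᵥ ((U * Matrix.diagonal (fun i => (d i : ℂ)) * Uᴴ) *ᵥ x)
      = ((∑ l, d l * Complex.normSq ((Uᴴ *ᵥ x) l) : ℝ) : ℂ) := by
  rw [← Matrix.mulVec_mulVec, ← Matrix.mulVec_mulVec, dot_shift]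
  set y := Uᴴ *ᵥ x with hy
  push_cast
  simp only [dotProduct, Pi.star_apply, Matrix.mulVec_diagonal]
  congr 1; funext l
  rw [Complex.normSq_eq_conj_mul_self]
  simp only [Complex.star_def]
  push_cast
  ring

lemma norm_pres {U : Matrix (Fin q) (Fin q) ℂ} (hU : U * Uᴴ = 1) (x : Fin q → ℂ) :
    ∑ l, Complex.normSq ((Uᴴ *ᵥ x) l) = ∑ l, Complex.normSq (x l) := by
  have h1 : star (Uᴴ *ᵥ x) ⬝ᵥ (Uᴴ *ᵥ x) = star x ⬝ᵥ x := by
    rw [← dot_shift, Matrix.mulVec_mulVec, hU, Matrix.one_mulVec]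
  rw [dot_self_eq, dot_self_eq] at h1
  exact_mod_cast h1

lemma abs_quad_le {A₂₂ : Matrix (Fin q) (Fin q) ℂ} (h22 : A₂₂.IsHermitian) (x : Fin q → ℂ) :
    ‖star x ⬝ᵥ (A₂₂ *ᵥ x)‖ ≤ specNorm A₂₂ * ∑ l, Complex.normSq (x l) := by
  have hq : star x ⬝ᵥ (A₂₂ *ᵥ x)
      = ((∑ l, h22.eigenvalues l *
          Complex.normSq (((h22.eigenvectorUnitary : Matrix (Fin q) (Fin q) ℂ)ᴴ *ᵥ x) l) : ℝ) : ℂ) := by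
    conv_lhs => rw [spectral' h22]
    exact quad_diag _ _ x
  rw [hq, Complex.norm_real, Real.norm_eq_abs]
  set z := (h22.eigenvectorUnitary : Matrix (Fin q) (Fin q) ℂ)ᴴ *ᵥ x with hz
  calc |∑ l, h22.eigenvalues l * Complex.normSq (z l)|
      ≤ ∑ l, |h22.eigenvalues l * Complex.normSq (z l)| := Finset.abs_sum_le_sum_abs _ _
    _ ≤ ∑ l, specNorm A₂₂ * Complex.normSq (z l) := by
        apply Finset.sum_le_sum
        intro l _
        rw [abs_mul, abs_of_nonneg (Complex.normSq_nonneg _)]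
        exact mul_le_mul_of_nonneg_right (abs_eig_le_specNorm h22 l) (Complex.normSq_nonneg _)
    _ = specNorm A₂₂ * ∑ l, Complex.normSq (z l) := by rw [Finset.mul_sum]
    _ = specNorm A₂₂ * ∑ l, Complex.normSq (x l) := by
        rw [norm_pres (eigU_mul_star h22) x]

end Quad

section LemmaK

variable {k : ℕ}

lemma sum_sortDown_comp (f : ℝ → ℝ) (x : Fin k → ℝ) :
    ∑ i, f (sortDown x i) = ∑ i, f (x i) := by
  rw [show (fun i => f (sortDown x i)) = fun i => (f ∘ x) ((sdperm x) i) from rfl]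
  exact Equiv.sum_comp (sdperm x) (f ∘ x)

lemma card_filter_lt_of_lt {j : ℕ} (hjk : j < k) :
    (Finset.univ.filter fun i : Fin k => (i : ℕ) < j).card = j := by
  have h : (Finset.univ.filter fun i : Fin k => (i : ℕ) < j) = Finset.Iio (⟨j, hjk⟩ : Fin k) := by
    ext i
    simp [Fin.lt_def]
  rw [h, Fin.card_Iio]

lemma psum_eq_sum_of_le {x : Fin k → ℝ} {j : ℕ} (h : k ≤ j) :
    psum x j = ∑ i, x i := by
  unfold psum
  rw [Finset.filter_true_of_mem (fun i _ => lt_of_lt_of_le i.isLt h)]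
  exact sum_sortDown_comp id x

lemma sum_mul_weight_le_psum {j : ℕ} (μ ω : Fin k → ℝ) (hμ : ∀ l, 0 ≤ μ l)
    (hω0 : ∀ l, 0 ≤ ω l) (hω1 : ∀ l, ω l ≤ 1) (hs : ∑ l, ω l ≤ (j : ℝ)) :
    ∑ l, μ l * ω l ≤ psum μ j := by
  by_cases hjk : j < k
  · set t := sortDown μ ⟨j, hjk⟩ with ht
    have ht0 : 0 ≤ t := by
      obtain ⟨l, hl⟩ := sortDown_mem_range μ ⟨j, hjk⟩
      rw [ht, ← hl]; exact hμ l
    have step1 : ∑ l, μ l * ω l ≤ (∑ l, max (μ l - t) 0) + t * ∑ l, ω l := by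
      rw [Finset.mul_sum, ← Finset.sum_add_distrib]
      apply Finset.sum_le_sum
      intro l _
      have key : (μ l - t) * ω l ≤ max (μ l - t) 0 := by
        rcases le_or_gt 0 (μ l - t) with h | h
        · calc (μ l - t) * ω l ≤ (μ l - t) * 1 :=
              mul_le_mul_of_nonneg_left (hω1 l) h
            _ ≤ max (μ l - t) 0 := by rw [mul_one]; exact le_max_left _ _
        · calc (μ l - t) * ω l ≤ 0 := mul_nonpos_of_nonpos_of_nonneg h.le (hω0 l)
            _ ≤ max (μ l - t) 0 := le_max_right _ _
      nlinarith [key]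
    have step2 : ∑ l, max (μ l - t) 0 = psum μ j - (j : ℝ) * t := by
      have e1 : ∑ l, max (μ l - t) 0 = ∑ l, max (sortDown μ l - t) 0 :=
        (sum_sortDown_comp (fun v => max (v - t) 0) μ).symm
      rw [e1, ← Finset.sum_filter_add_sum_filter_not Finset.univ
        (fun i : Fin k => (i : ℕ) < j)]
      have e2 : ∑ i ∈ Finset.univ.filter fun i : Fin k => ¬ (i : ℕ) < j,
          max (sortDown μ i - t) 0 = 0 := by
        apply Finset.sum_eq_zero
        intro i hi
        have hji : (⟨j, hjk⟩ : Fin k) ≤ i := by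
          have := (Finset.mem_filter.mp hi).2
          exact Fin.mk_le_of_le_val (by omega)
        have : sortDown μ i ≤ t := antitone_sortDown μ hji
        simp [max_eq_right, this, sub_nonpos.mpr this]
      have e3 : ∑ i ∈ Finset.univ.filter fun i : Fin k => (i : ℕ) < j,
          max (sortDown μ i - t) 0
          = ∑ i ∈ Finset.univ.filter fun i : Fin k => (i : ℕ) < j, (sortDown μ i - t) := by
        apply Finset.sum_congr rfl
        intro i hi
        have h2 := (Finset.mem_filter.mp hi).2
        have hij : i ≤ (⟨j, hjk⟩ : Fin k) := by
          rw [Fin.le_def]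
          exact le_of_lt h2
        have hts : t ≤ sortDown μ i := antitone_sortDown μ hij
        exact max_eq_left (by linarith)
      rw [e2, e3, add_zero, Finset.sum_sub_distrib, Finset.sum_const,
        card_filter_lt_of_lt hjk, nsmul_eq_mul]
      rfl
    have hts : t * ∑ l, ω l ≤ t * (j : ℝ) := mul_le_mul_of_nonneg_left hs ht0
    calc ∑ l, μ l * ω l ≤ (∑ l, max (μ l - t) 0) + t * ∑ l, ω l := step1
      _ = psum μ j - (j : ℝ) * t + t * ∑ l, ω l := by rw [step2]
      _ ≤ psum μ j - (j : ℝ) * t + t * (j : ℝ) := by linarith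
      _ = psum μ j := by ring
  · push_neg at hjk
    rw [psum_eq_sum_of_le hjk]
    apply Finset.sum_le_sum
    intro l _
    calc μ l * ω l ≤ μ l * 1 := mul_le_mul_of_nonneg_left (hω1 l) (hμ l)
      _ = μ l := mul_one _
end LemmaK
section Core

lemma eig_congr {q : ℕ} {M N : Matrix (Fin q) (Fin q) ℂ} (h : M = N)
    (hM : M.IsHermitian) (hN : N.IsHermitian) : hM.eigenvalues = hN.eigenvalues := by
  subst h; rfl

lemma core_ineq {k m : ℕ} (A₂₂ : Matrix (Fin m) (Fin m) ℂ) (h22 : A₂₂.IsHermitian)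
    (S : Matrix (Fin m) (Fin k) ℂ)
    (hM : (Sᴴ * A₂₂ * S).IsHermitian) (hP : (Sᴴ * S).IsHermitian) (j : ℕ) :
    psum (fun i => |hM.eigenvalues i|) j ≤ specNorm A₂₂ * psum hP.eigenvalues j := by
  classical
  set c := specNorm A₂₂ with hc
  have hc0 : 0 ≤ c := specNorm_nonneg A₂₂
  set ν := hM.eigenvalues with hν
  set μ := hP.eigenvalues with hμdef
  have hμ0 : ∀ l, 0 ≤ μ l := fun l =>
    Matrix.eigenvalues_conjTranspose_mul_self_nonneg S l
  set V := (hM.eigenvectorUnitary : Matrix (Fin k) (Fin k) ℂ) with hV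
  set W := (hP.eigenvectorUnitary : Matrix (Fin k) (Fin k) ℂ) with hW
  set G := Wᴴ * V with hG
  have hG2 : G * Gᴴ = 1 := by
    rw [hG, Matrix.conjTranspose_mul, Matrix.conjTranspose_conjTranspose]
    calc Wᴴ * V * (Vᴴ * W) = Wᴴ * (V * Vᴴ) * W := by simp only [Matrix.mul_assoc]
      _ = Wᴴ * W := by rw [eigU_mul_star hM, Matrix.mul_one]
      _ = 1 := star_mul_eigU hP
  have hG1 : Gᴴ * G = 1 := by
    rw [hG, Matrix.conjTranspose_mul, Matrix.conjTranspose_conjTranspose]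
    calc Vᴴ * W * (Wᴴ * V) = Vᴴ * (W * Wᴴ) * V := by simp only [Matrix.mul_assoc]
      _ = Vᴴ * V := by rw [eigU_mul_star hP, Matrix.mul_one]
      _ = 1 := star_mul_eigU hM
  have hrow : ∀ l, ∑ i', Complex.normSq (G l i') = 1 := by
    intro l
    have h := congrFun (congrFun hG2 l) l
    rw [Matrix.mul_apply, Matrix.one_apply_eq] at h
    have h2 : ((∑ i', Complex.normSq (G l i') : ℝ) : ℂ) = 1 := by
      push_cast
      rw [← h]
      apply Finset.sum_congr rfl
      intro i' _
      rw [Matrix.conjTranspose_apply, ← Complex.mul_conj]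
      rfl
    exact_mod_cast h2
  have hcol : ∀ i', ∑ l, Complex.normSq (G l i') = 1 := by
    intro i'
    have h := congrFun (congrFun hG1 i') i'
    rw [Matrix.mul_apply, Matrix.one_apply_eq] at h
    have h2 : ((∑ l, Complex.normSq (G l i') : ℝ) : ℂ) = 1 := by
      push_cast
      rw [← h]
      apply Finset.sum_congr rfl
      intro l _
      rw [Matrix.conjTranspose_apply, Complex.normSq_eq_conj_mul_self]
      rfl
    exact_mod_cast h2
  -- key pointwise bound
  have hkey : ∀ i' : Fin k, |ν i'| ≤ c * ∑ l, μ l * Complex.normSq (G l i') := by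
    intro i'
    set v : Fin k → ℂ := fun r => V r i' with hv
    have hVv : Vᴴ *ᵥ v = fun l => (1 : Matrix (Fin k) (Fin k) ℂ) l i' := by
      rw [← star_mul_eigU hM]
      rfl
    have hWv : Wᴴ *ᵥ v = fun l => G l i' := by
      rw [hG]
      rfl
    have ha : star v ⬝ᵥ ((Sᴴ * A₂₂ * S) *ᵥ v) = ((ν i' : ℝ) : ℂ) := by
      conv_lhs => rw [spectral' hM]
      rw [quad_diag, hVv]
      norm_cast
      rw [show ∑ l, ν l * Complex.normSq ((1 : Matrix (Fin k) (Fin k) ℂ) l i')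
        = ∑ l, (if l = i' then ν l else 0) by
          apply Finset.sum_congr rfl
          intro l _
          by_cases hl : l = i' <;> simp [hl, Matrix.one_apply]]
      rw [Finset.sum_ite_eq' Finset.univ i' ν]
      simp
    have hb : star v ⬝ᵥ ((Sᴴ * S) *ᵥ v) = ((∑ l, μ l * Complex.normSq (G l i') : ℝ) : ℂ) := by
      conv_lhs => rw [spectral' hP]
      rw [quad_diag, hWv]
    have hc' : star v ⬝ᵥ ((Sᴴ * A₂₂ * S) *ᵥ v)
        = star (S *ᵥ v) ⬝ᵥ (A₂₂ *ᵥ (S *ᵥ v)) := by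
      rw [← Matrix.mulVec_mulVec, ← Matrix.mulVec_mulVec, dot_shift,
        Matrix.conjTranspose_conjTranspose]
    have hnorm : ∑ l, Complex.normSq ((S *ᵥ v) l) = ∑ l, μ l * Complex.normSq (G l i') := by
      have h1 : ((∑ l, Complex.normSq ((S *ᵥ v) l) : ℝ) : ℂ)
          = ((∑ l, μ l * Complex.normSq (G l i') : ℝ) : ℂ) := by
        rw [← dot_self_eq, ← hb, ← Matrix.mulVec_mulVec,
          dot_shift Sᴴ v (S *ᵥ v), Matrix.conjTranspose_conjTranspose]
      exact_mod_cast h1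
    calc |ν i'| = ‖((ν i' : ℝ) : ℂ)‖ := by rw [Complex.norm_real, Real.norm_eq_abs]
      _ = ‖star (S *ᵥ v) ⬝ᵥ (A₂₂ *ᵥ (S *ᵥ v))‖ := by rw [← ha, hc']
      _ ≤ c * ∑ l, Complex.normSq ((S *ᵥ v) l) := abs_quad_le h22 _
      _ = c * ∑ l, μ l * Complex.normSq (G l i') := by rw [hnorm]
  -- sum over the top-j indices
  unfold psum
  set F := Finset.univ.filter fun i : Fin k => (i : ℕ) < j with hF
  have hFcard : F.card ≤ j := by
    have h1 : F.card ≤ (Finset.range j).card :=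
      Finset.card_le_card_of_injOn (fun i => (i : ℕ))
        (fun i hi => Finset.mem_range.mpr (Finset.mem_filter.mp hi).2)
        (fun a _ b _ hab => Fin.val_injective hab)
    simpa using h1
  set σ := Tuple.sort (fun i : Fin k => |ν i|) with hσ
  have hsdapp : ∀ i, sortDown (fun i => |ν i|) i = |ν (σ i.rev)| := fun i => rfl
  set I := F.image (fun i => σ i.rev) with hI
  have hinj : Set.InjOn (fun i : Fin k => σ i.rev) F := fun a _ b _ hab => by
    have := σ.injective hab
    exact Fin.rev_injective this
  have hIcard : I.card = F.card := Finset.card_image_of_injOn hinj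
  have hsum1 : ∑ i ∈ F, sortDown (fun i => |ν i|) i = ∑ i' ∈ I, |ν i'| := by
    rw [hI, Finset.sum_image hinj]
    exact Finset.sum_congr rfl fun i _ => hsdapp i
  set ω : Fin k → ℝ := fun l => ∑ i' ∈ I, Complex.normSq (G l i') with hω
  have hω0 : ∀ l, 0 ≤ ω l := fun l =>
    Finset.sum_nonneg fun i' _ => Complex.normSq_nonneg _
  have hω1 : ∀ l, ω l ≤ 1 := by
    intro l
    rw [← hrow l]
    apply Finset.sum_le_sum_of_subset_of_nonneg (Finset.subset_univ I)
    intro i' _ _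
    exact Complex.normSq_nonneg _
  have hωsum : ∑ l, ω l ≤ (j : ℝ) := by
    rw [hω]
    rw [Finset.sum_comm]
    have : ∑ i' ∈ I, ∑ l, Complex.normSq (G l i') = ∑ i' ∈ I, (1 : ℝ) :=
      Finset.sum_congr rfl fun i' _ => hcol i'
    rw [this, Finset.sum_const, nsmul_eq_mul, mul_one]
    exact_mod_cast hIcard ▸ hFcard
  calc ∑ i ∈ F, sortDown (fun i => |ν i|) i = ∑ i' ∈ I, |ν i'| := hsum1
    _ ≤ ∑ i' ∈ I, c * ∑ l, μ l * Complex.normSq (G l i') :=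
        Finset.sum_le_sum fun i' _ => hkey i'
    _ = c * ∑ l, μ l * ω l := by
        rw [← Finset.mul_sum]
        congr 1
        rw [Finset.sum_comm]
        apply Finset.sum_congr rfl
        intro l _
        rw [hω, Finset.mul_sum]
    _ ≤ c * psum μ j := by
        apply mul_le_mul_of_nonneg_left _ hc0
        exact sum_mul_weight_le_psum μ ω hμ0 hω0 hω1 hωsum
    _ = c * ∑ i ∈ F, sortDown μ i := rfl

end Core
/-- With `[X, X⊥]` unitary, `S = X⊥ᴴ Y`, `A₂₂ = X⊥ᴴ A X⊥`:
`|λ(-Sᴴ A₂₂ S)|` arranged in nonincreasing order equals `s(Sᴴ A₂₂ S)`, and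
`s(Sᴴ A₂₂ S) ≺_w ‖A₂₂‖ * sin^2 θ(𝒳,𝒴)`. -/
theorem neg_SHAS_eig_abs_eq_sing_and_bound
    {n k m : ℕ} (hn : n = k + m)
    (A : Matrix (Fin n) (Fin n) ℂ) (hA : A.IsHermitian)
    (X : Matrix (Fin n) (Fin k) ℂ) (Xp : Matrix (Fin n) (Fin m) ℂ)
    (hX : Xᴴ * X = 1) (hXp : Xpᴴ * Xp = 1) (hXXp : Xᴴ * Xp = 0)
    (Y : Matrix (Fin n) (Fin k) ℂ) (hY : Yᴴ * Y = 1) :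
    sortDown (fun i =>
        |eigDown ((Matrix.isHermitian_conjTranspose_mul_mul (Xpᴴ * Y)
            (Matrix.isHermitian_conjTranspose_mul_mul Xp hA)).neg) i|)
      = singDown ((Xpᴴ * Y)ᴴ * (Xpᴴ * A * Xp) * (Xpᴴ * Y)) ∧
    WeakMaj (singDown ((Xpᴴ * Y)ᴴ * (Xpᴴ * A * Xp) * (Xpᴴ * Y)))
      (fun i => specNorm (Xpᴴ * A * Xp) * Real.sin (principalAngles X Y i) ^ 2) := by
  classical
  have hA22 : (Xpᴴ * A * Xp).IsHermitian := Matrix.isHermitian_conjTranspose_mul_mul Xp hA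
  have hM : ((Xpᴴ * Y)ᴴ * (Xpᴴ * A * Xp) * (Xpᴴ * Y)).IsHermitian :=
    Matrix.isHermitian_conjTranspose_mul_mul _ hA22
  have hMn : (-((Xpᴴ * Y)ᴴ * (Xpᴴ * A * Xp) * (Xpᴴ * Y))).IsHermitian := hM.neg
  constructor
  · -- Part 1
    show sortDown (fun i => |eigDown hMn i|) = _
    have e1 : (fun i => |eigDown hMn i|)
        = ((fun v => |v|) ∘ hMn.eigenvalues) ∘ ⇑(sdperm hMn.eigenvalues) := rfl
    rw [e1, sortDown_perm, singDown_hermitian hM]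
    apply sortDown_congr
    calc Multiset.map ((fun v => |v|) ∘ hMn.eigenvalues) Finset.univ.val
        = Multiset.map (fun v => |v|) (Multiset.map hMn.eigenvalues Finset.univ.val) :=
          (Multiset.map_map _ _ _).symm
      _ = Multiset.map (fun v => |v|)
          (Multiset.map (fun i => -hM.eigenvalues i) Finset.univ.val) := by
          rw [eig_mset_neg hM hMn]
      _ = Multiset.map (fun i => |hM.eigenvalues i|) Finset.univ.val := by
          rw [Multiset.map_map]
          congr 1
          funext i
          simp [abs_neg]
  · -- Part 2
    have hXpX : Xpᴴ * X = 0 := by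
      calc Xpᴴ * X = (Xᴴ * Xp)ᴴ := by
            rw [Matrix.conjTranspose_mul, Matrix.conjTranspose_conjTranspose]
        _ = 0 := by rw [hXXp]; simp
    have hcomp : X * Xᴴ + Xp * Xpᴴ = 1 := by
      have e : Fin n ≃ Fin k ⊕ Fin m := (finCongr hn).trans finSumFinEquiv.symm
      have hZ : Matrix.fromRows Xᴴ Xpᴴ * Matrix.fromCols X Xp = 1 := by
        rw [Matrix.fromRows_mul_fromCols, hX, hXp, hXXp, hXpX, Matrix.fromBlocks_one]
      have h2 := (Matrix.fromCols_mul_fromRows_eq_one_comm e X Xp Xᴴ Xpᴴ).mpr hZ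
      rw [Matrix.fromCols_mul_fromRows] at h2
      exact h2
    have hPT : (Xpᴴ * Y)ᴴ * (Xpᴴ * Y) = 1 - (Xᴴ * Y)ᴴ * (Xᴴ * Y) := by
      rw [Matrix.conjTranspose_mul, Matrix.conjTranspose_mul,
        Matrix.conjTranspose_conjTranspose, Matrix.conjTranspose_conjTranspose]
      have hXpXp : Xp * Xpᴴ = 1 - X * Xᴴ := eq_sub_of_add_eq' hcomp
      calc Yᴴ * Xp * (Xpᴴ * Y) = Yᴴ * (Xp * Xpᴴ) * Y := by simp only [Matrix.mul_assoc]
        _ = Yᴴ * (1 - X * Xᴴ) * Y := by rw [hXpXp]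
        _ = Yᴴ * Y - Yᴴ * X * (Xᴴ * Y) := by
            rw [Matrix.mul_sub, Matrix.sub_mul, Matrix.mul_one]
            simp only [Matrix.mul_assoc]
        _ = 1 - Yᴴ * X * (Xᴴ * Y) := by rw [hY]
    have hP : ((Xpᴴ * Y)ᴴ * (Xpᴴ * Y)).IsHermitian := Matrix.isHermitian_conjTranspose_mul_self _
    have hTT : ((Xᴴ * Y)ᴴ * (Xᴴ * Y)).IsHermitian := Matrix.isHermitian_conjTranspose_mul_self _
    set μ := hP.eigenvalues with hμ
    set τ := hTT.eigenvalues with hτ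
    have h1T : (1 - (Xᴴ * Y)ᴴ * (Xᴴ * Y)).IsHermitian := hPT ▸ hP
    have hmset : Multiset.map μ Finset.univ.val
        = Multiset.map (fun l => 1 - τ l) Finset.univ.val := by
      rw [hμ, eig_congr hPT hP h1T]
      exact eig_mset_one_sub hTT h1T
    have hμ0 : ∀ l, 0 ≤ μ l := fun l =>
      Matrix.eigenvalues_conjTranspose_mul_self_nonneg _ l
    have hτ0 : ∀ l, 0 ≤ τ l := fun l =>
      Matrix.eigenvalues_conjTranspose_mul_self_nonneg _ l
    have hτ1 : ∀ l, τ l ≤ 1 := by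
      intro l
      have hmem : (1 - τ l) ∈ Set.range μ := by
        rw [range_eq_of_mset hmset]
        exact ⟨l, rfl⟩
      obtain ⟨l', hl'⟩ := hmem
      have := hμ0 l'
      linarith [hl']
    have hanti : Antitone (fun v : ℝ => 1 - v) := fun a b h => by simp; linarith
    have hsin : ∀ i, Real.sin (principalAngles X Y i) ^ 2 = sortDown μ i := by
      intro i
      have hsT : singDown (Xᴴ * Y) = fun i => Real.sqrt (sortDown τ i) := by
        unfold singDown
        rw [show (fun i => Real.sqrt
            ((Matrix.isHermitian_conjTranspose_mul_self (Xᴴ * Y)).eigenvalues i))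
          = Real.sqrt ∘ τ from rfl]
        rw [sortDown_comp_mono (fun a b h => Real.sqrt_le_sqrt h)]
        rfl
      have hμτ : sortDown μ = fun i => 1 - sortDown τ i.rev := by
        rw [show (fun l => 1 - τ l) = (fun v : ℝ => 1 - v) ∘ τ from rfl] at hmset
        rw [sortDown_congr hmset, sortDown_comp_anti hanti]
      obtain ⟨l, hl⟩ := sortDown_mem_range τ i.rev
      have h0 : 0 ≤ sortDown τ i.rev := hl ▸ hτ0 l
      have h1 : sortDown τ i.rev ≤ 1 := hl ▸ hτ1 l
      unfold principalAngles
      rw [hsT, Real.sin_arccos, Real.sq_sqrt h0, Real.sq_sqrt (by linarith : 0 ≤ 1 - sortDown τ i.rev), hμτ]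
    intro j
    have hL : psum (singDown ((Xpᴴ * Y)ᴴ * (Xpᴴ * A * Xp) * (Xpᴴ * Y))) j
        = psum (fun i => |hM.eigenvalues i|) j := by
      unfold psum
      apply Finset.sum_congr rfl
      intro i _
      rw [singDown_hermitian hM, sortDown_idem]
    have hmono : Monotone (fun v : ℝ => specNorm (Xpᴴ * A * Xp) * v) :=
      fun a b h => mul_le_mul_of_nonneg_left h (specNorm_nonneg _)
    have hR : psum (fun i => specNorm (Xpᴴ * A * Xp) * Real.sin (principalAngles X Y i) ^ 2) j
        = specNorm (Xpᴴ * A * Xp) * psum μ j := by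
      have hre : (fun i => specNorm (Xpᴴ * A * Xp) * Real.sin (principalAngles X Y i) ^ 2)
          = (fun v : ℝ => specNorm (Xpᴴ * A * Xp) * v) ∘ sortDown μ := by
        funext i
        rw [hsin i]
        rfl
      unfold psum
      rw [hre, sortDown_comp_mono hmono, sortDown_idem, Finset.mul_sum]
      rfl
    rw [hL, hR]
    exact core_ineq (Xpᴴ * A * Xp) hA22 (Xpᴴ * Y) hM hP j
end

section
/- Let A ∈ ℂ^{4×4} be the Hermitian matrix with 2×2 blocks A = [[A₁₁, 0],[0, A₂₂]], A₁₁ = [[0,1],[1,0]], A₂₂ = I₂; let X = (e₁, e₂), X⊥ = (e₃, e₄) (so [X, X⊥] = I₄), and let Y = (e₃, e₂) ∈ ℂ^{4×2}. Set C := X^H Y and S := X⊥^H Y. Then range(X) is A-invariant, θ(range(X), range(Y)) = (π/2, 0), spr(A) = 2, the vector a := [λ(A₁₁) − λ(C^H A₁₁ C)]^↓ + λ(−S^H A₂₂ S) equals (1, −2), and |a| is NOT weakly majorized by spr(A) · sin²θ(range(X), range(Y)) = (2, 0); nevertheless |λ(X^H A X) − λ(Y^H A Y)| = (0, 1) IS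 weakly majorized by (2, 0). -/
open Matrix Finset

section AuxLemmas

lemma aux_sortDown_pair (x : Fin 2 → ℝ) :
    sortDown x = ![max (x 0) (x 1), min (x 0) (x 1)] := by
  have hmono := Tuple.monotone_sort x
  have h01 : x (Tuple.sort x 0) ≤ x (Tuple.sort x 1) :=
    hmono (by decide : (0:Fin 2) ≤ 1)
  have htwo : ∀ t : Fin 2, t = 0 ∨ t = 1 := by decide
  funext i
  rcases htwo i with rfl | rfl
  · show x (Tuple.sort x (0:Fin 2).rev) = _
    have hrev : (0 : Fin 2).rev = 1 := by decide
    rw [hrev]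
    rcases htwo (Tuple.sort x 0) with h0 | h0
    · have h1 : Tuple.sort x 1 = 1 := by
        rcases htwo (Tuple.sort x 1) with h1 | h1
        · exact absurd ((Tuple.sort x).injective (h0.trans h1.symm)) (by decide)
        · exact h1
      rw [h0, h1] at h01
      rw [h1]
      simp [max_eq_right h01]
    · have h1 : Tuple.sort x 1 = 0 := by
        rcases htwo (Tuple.sort x 1) with h1 | h1
        · exact h1
        · exact absurd ((Tuple.sort x).injective (h0.trans h1.symm)) (by decide)
      rw [h0, h1] at h01
      rw [h1]
      simp [max_eq_left h01]
  · show x (Tuple.sort x (1:Fin 2).rev) = _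
    have hrev : (1 : Fin 2).rev = 0 := by decide
    rw [hrev]
    rcases htwo (Tuple.sort x 0) with h0 | h0
    · have h1 : Tuple.sort x 1 = 1 := by
        rcases htwo (Tuple.sort x 1) with h1 | h1
        · exact absurd ((Tuple.sort x).injective (h0.trans h1.symm)) (by decide)
        · exact h1
      rw [h0, h1] at h01
      rw [h0]
      simp [min_eq_left h01]
    · have h1 : Tuple.sort x 1 = 0 := by
        rcases htwo (Tuple.sort x 1) with h1 | h1
        · exact h1
        · exact absurd ((Tuple.sort x).injective (h0.trans h1.symm)) (by decide)
      rw [h0, h1] at h01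
      rw [h0]
      simp [min_eq_right h01]

lemma aux_sortDown_of_vals (x : Fin 2 → ℝ) (a b : ℝ) (hba : b ≤ a)
    (h : (x 0 = a ∧ x 1 = b) ∨ (x 0 = b ∧ x 1 = a)) : sortDown x = ![a, b] := by
  rw [aux_sortDown_pair]
  rcases h with ⟨h0, h1⟩ | ⟨h0, h1⟩ <;> rw [h0, h1]
  · rw [max_eq_left hba, min_eq_right hba]
  · rw [max_eq_right hba, min_eq_left hba]

lemma aux_eig_det_zero {n : Type*} [Fintype n] [DecidableEq n] {M : Matrix n n ℂ}
    (hM : M.IsHermitian) (i : n) :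
    Matrix.det (algebraMap ℝ (Matrix n n ℂ) (hM.eigenvalues i) - M) = 0 := by
  have h := hM.eigenvalues_mem_spectrum_real i
  rw [spectrum.mem_iff] at h
  by_contra hd
  exact h ((Matrix.isUnit_iff_isUnit_det _).mpr (isUnit_iff_ne_zero.mpr hd))

lemma aux_sum_eig {n : Type*} [Fintype n] [DecidableEq n] {M : Matrix n n ℂ}
    (hM : M.IsHermitian) :
    ∑ i, (hM.eigenvalues i : ℂ) = M.trace := by
  conv_rhs => rw [hM.spectral_theorem]
  rw [Unitary.conjStarAlgAut_apply, Matrix.trace_mul_cycle]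
  rw [Unitary.coe_star_mul_self, Matrix.one_mul, Matrix.trace_diagonal]
  simp

lemma aux_eigenvalues_two {M : Matrix (Fin 2) (Fin 2) ℂ} (hM : M.IsHermitian) (a b : ℝ)
    (hdet : ∀ μ : ℝ,
      Matrix.det (algebraMap ℝ (Matrix (Fin 2) (Fin 2) ℂ) μ - M) = 0 → μ = a ∨ μ = b)
    (htr : M.trace = (a : ℂ) + b) :
    (hM.eigenvalues 0 = a ∧ hM.eigenvalues 1 = b) ∨
      (hM.eigenvalues 0 = b ∧ hM.eigenvalues 1 = a) := by
  have hmem := fun i => hdet _ (aux_eig_det_zero hM i)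
  have hsum : hM.eigenvalues 0 + hM.eigenvalues 1 = a + b := by
    have h := aux_sum_eig hM
    rw [Fin.sum_univ_two, htr] at h
    exact_mod_cast h
  rcases hmem 0 with h0 | h0
  · left; exact ⟨h0, by linarith⟩
  · right; exact ⟨h0, by linarith⟩

lemma aux_eigDown_two {M : Matrix (Fin 2) (Fin 2) ℂ} (hM : M.IsHermitian) (a b : ℝ)
    (hba : b ≤ a)
    (hdet : ∀ μ : ℝ,
      Matrix.det (algebraMap ℝ (Matrix (Fin 2) (Fin 2) ℂ) μ - M) = 0 → μ = a ∨ μ = b)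
    (htr : M.trace = (a : ℂ) + b) : eigDown hM = ![a, b] :=
  aux_sortDown_of_vals _ a b hba (aux_eigenvalues_two hM a b hdet htr)

lemma aux_sprA_eq_two {A : Matrix (Fin 2 ⊕ Fin 2) (Fin 2 ⊕ Fin 2) ℂ} (hA : A.IsHermitian)
    (hmem : ∀ i, hA.eigenvalues i = 1 ∨ hA.eigenvalues i = -1)
    (hsum : ∑ i, hA.eigenvalues i = 2) : sprA hA = 2 := by
  have h1 : ∃ i, hA.eigenvalues i = 1 := by
    by_contra hc
    push_neg at hc
    have hall : ∀ i, hA.eigenvalues i = -1 := fun i => (hmem i).resolve_left (hc i)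
    rw [Fintype.sum_sum_type, Fin.sum_univ_two, Fin.sum_univ_two, hall, hall, hall, hall] at hsum
    norm_num at hsum
  have h2 : ∃ i, hA.eigenvalues i = -1 := by
    by_contra hc
    push_neg at hc
    have hall : ∀ i, hA.eigenvalues i = 1 := fun i => (hmem i).resolve_right (hc i)
    rw [Fintype.sum_sum_type, Fin.sum_univ_two, Fin.sum_univ_two, hall, hall, hall, hall] at hsum
    norm_num at hsum
  obtain ⟨i1, hi1⟩ := h1
  obtain ⟨i2, hi2⟩ := h2
  have hsup : sSup (Set.range hA.eigenvalues) = 1 := by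
    apply IsGreatest.csSup_eq
    refine ⟨⟨i1, hi1⟩, ?_⟩
    rintro y ⟨i, rfl⟩
    rcases hmem i with h | h <;> rw [h] <;> norm_num
  have hinf : sInf (Set.range hA.eigenvalues) = -1 := by
    apply IsLeast.csInf_eq
    refine ⟨⟨i2, hi2⟩, ?_⟩
    rintro y ⟨i, rfl⟩
    rcases hmem i with h | h <;> rw [h] <;> norm_num
  rw [sprA, hsup, hinf]; norm_num

lemma aux_psum_zero (x : Fin 2 → ℝ) : psum x 0 = 0 := by
  simp [psum]

lemma aux_psum_one (x : Fin 2 → ℝ) : psum x 1 = sortDown x 0 := by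
  have h : (Finset.univ.filter fun i : Fin 2 => (i : ℕ) < 1) = {0} := by decide
  rw [psum, h, Finset.sum_singleton]

lemma aux_psum_two (x : Fin 2 → ℝ) {j : ℕ} (hj : 2 ≤ j) :
    psum x j = sortDown x 0 + sortDown x 1 := by
  rw [psum, Finset.filter_true_of_mem (fun i _ => lt_of_lt_of_le i.isLt hj), Fin.sum_univ_two]

end AuxLemmas

/-- The 4×4 counterexample to proving the conjecture via the
Lidskii step: `range X` is `A`-invariant, `θ = (π/2, 0)`, `spr(A) = 2`, the
vector `a = [λ(A₁₁) - λ(Cᴴ A₁₁ C)]^↓ + λ(-Sᴴ A₂₂ S)` equals `(1, -2)`, and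
`|a|` is NOT weakly majorized by `spr(A) sin² θ = (2, 0)`; nevertheless
`|λ(Xᴴ A X) - λ(Yᴴ A Y)| = (0, 1)` IS weakly majorized by `(2, 0)`. -/
theorem ritz_error_lidskii_counterexample
    (A : Matrix (Fin 2 ⊕ Fin 2) (Fin 2 ⊕ Fin 2) ℂ)
    (hAdef : A = Matrix.fromBlocks !![0, 1; 1, 0] 0 0 1)
    (X Xp Y : Matrix (Fin 2 ⊕ Fin 2) (Fin 2) ℂ)
    (hXdef : X = Matrix.fromRows 1 0)
    (hXpdef : Xp = Matrix.fromRows 0 1)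
    (hYdef : Y = Matrix.fromRows !![0, 0; 0, 1] !![1, 0; 0, 0])
    (hA : A.IsHermitian) :
    InvariantRange A X ∧
    principalAngles X Y = ![Real.pi / 2, 0] ∧
    sprA hA = 2 ∧
    (fun i => sprA hA * Real.sin (principalAngles X Y i) ^ 2) = ![(2 : ℝ), 0] ∧
    (fun i =>
        sortDown (fun j => eigDown (Matrix.isHermitian_conjTranspose_mul_mul X hA) j
          - eigDown (Matrix.isHermitian_conjTranspose_mul_mul (Xᴴ * Y)
              (Matrix.isHermitian_conjTranspose_mul_mul X hA)) j) i
        + eigDown ((Matrix.isHermitian_conjTranspose_mul_mul (Xpᴴ * Y)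
            (Matrix.isHermitian_conjTranspose_mul_mul Xp hA)).neg) i)
      = ![(1 : ℝ), -2] ∧
    ¬ WeakMaj (fun i => |(![(1 : ℝ), -2]) i|) ![(2 : ℝ), 0] ∧
    (fun i => |eigDown (Matrix.isHermitian_conjTranspose_mul_mul X hA) i
        - eigDown (Matrix.isHermitian_conjTranspose_mul_mul Y hA) i|) = ![(0 : ℝ), 1] ∧
    WeakMaj (fun i => |eigDown (Matrix.isHermitian_conjTranspose_mul_mul X hA) i
        - eigDown (Matrix.isHermitian_conjTranspose_mul_mul Y hA) i|) ![(2 : ℝ), 0] := by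
    -- concrete matrix computations
  have hM1 : Xᴴ * A * X = !![0, 1; 1, 0] := by
    rw [hAdef, hXdef]
    ext i j
    fin_cases i <;> fin_cases j <;>
      simp [Matrix.mul_apply, Fintype.sum_sum_type, Fin.sum_univ_two, Matrix.fromBlocks,
        Matrix.fromRows_apply_inl, Matrix.fromRows_apply_inr, Matrix.conjTranspose_apply, Matrix.one_apply]
  have hMY : Yᴴ * A * Y = !![1, 0; 0, 0] := by
    rw [hAdef, hYdef]
    ext i j
    fin_cases i <;> fin_cases j <;>
      simp [Matrix.mul_apply, Fintype.sum_sum_type, Fin.sum_univ_two, Matrix.fromBlocks,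
        Matrix.fromRows_apply_inl, Matrix.fromRows_apply_inr, Matrix.conjTranspose_apply, Matrix.one_apply]
  have hXpA : Xpᴴ * A * Xp = !![1, 0; 0, 1] := by
    rw [hAdef, hXpdef]
    ext i j
    fin_cases i <;> fin_cases j <;>
      simp [Matrix.mul_apply, Fintype.sum_sum_type, Fin.sum_univ_two, Matrix.fromBlocks,
        Matrix.fromRows_apply_inl, Matrix.fromRows_apply_inr, Matrix.conjTranspose_apply, Matrix.one_apply]
  have hC : Xᴴ * Y = !![0, 0; 0, 1] := by
    rw [hXdef, hYdef]
    ext i j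
    fin_cases i <;> fin_cases j <;>
      simp [Matrix.mul_apply, Fintype.sum_sum_type, Fin.sum_univ_two,
        Matrix.fromRows_apply_inl, Matrix.fromRows_apply_inr, Matrix.conjTranspose_apply, Matrix.one_apply]
  have hS : Xpᴴ * Y = !![1, 0; 0, 0] := by
    rw [hXpdef, hYdef]
    ext i j
    fin_cases i <;> fin_cases j <;>
      simp [Matrix.mul_apply, Fintype.sum_sum_type, Fin.sum_univ_two,
        Matrix.fromRows_apply_inl, Matrix.fromRows_apply_inr, Matrix.conjTranspose_apply, Matrix.one_apply]
  have hM3 : (Xᴴ * Y)ᴴ * (Xᴴ * A * X) * (Xᴴ * Y) = !![0, 0; 0, 0] := by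
    rw [hC, hM1]
    ext i j
    fin_cases i <;> fin_cases j <;>
      simp [Matrix.mul_apply, Fin.sum_univ_two, Matrix.conjTranspose_apply]
  have hM4 : -((Xpᴴ * Y)ᴴ * (Xpᴴ * A * Xp) * (Xpᴴ * Y)) = !![-1, 0; 0, 0] := by
    rw [hS, hXpA]
    ext i j
    fin_cases i <;> fin_cases j <;>
      simp [Matrix.mul_apply, Fin.sum_univ_two, Matrix.conjTranspose_apply]
  have hCtC : (Xᴴ * Y)ᴴ * (Xᴴ * Y) = !![0, 0; 0, 1] := by
    rw [hC]
    ext i j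
    fin_cases i <;> fin_cases j <;>
      simp [Matrix.mul_apply, Fin.sum_univ_two, Matrix.conjTranspose_apply]
  -- eigenvalue computations
  have heig1 : eigDown (Matrix.isHermitian_conjTranspose_mul_mul X hA) = ![1, -1] := by
    apply aux_eigDown_two _ 1 (-1) (by norm_num)
    · intro μ h
      rw [hM1, Matrix.det_fin_two] at h
      simp [Matrix.algebraMap_matrix_apply] at h
      have h2 : ((μ:ℂ) - 1) * ((μ:ℂ) + 1) = 0 := by linear_combination h
      rcases mul_eq_zero.mp h2 with h3 | h3
      · left; have : (μ:ℂ) = 1 := by linear_combination h3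
        exact_mod_cast this
      · right; have : (μ:ℂ) = -1 := by linear_combination h3
        exact_mod_cast this
    · rw [hM1]; simp [Matrix.trace_fin_two]
  have heigY : eigDown (Matrix.isHermitian_conjTranspose_mul_mul Y hA) = ![1, 0] := by
    apply aux_eigDown_two _ 1 0 (by norm_num)
    · intro μ h
      rw [hMY, Matrix.det_fin_two] at h
      simp [Matrix.algebraMap_matrix_apply] at h
      rcases h with h | h
      · left; have : (μ:ℂ) = 1 := by linear_combination h
        exact_mod_cast this
      · right; exact h
    · rw [hMY]; simp [Matrix.trace_fin_two]
  have heig3 : eigDown (Matrix.isHermitian_conjTranspose_mul_mul (Xᴴ * Y)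
      (Matrix.isHermitian_conjTranspose_mul_mul X hA)) = ![0, 0] := by
    apply aux_eigDown_two _ 0 0 (by norm_num)
    · intro μ h
      rw [hM3, Matrix.det_fin_two] at h
      simp [Matrix.algebraMap_matrix_apply] at h
      exact Or.inl h
    · rw [hM3]; simp [Matrix.trace_fin_two]
  have heig4 : eigDown ((Matrix.isHermitian_conjTranspose_mul_mul (Xpᴴ * Y)
      (Matrix.isHermitian_conjTranspose_mul_mul Xp hA)).neg) = ![0, -1] := by
    apply aux_eigDown_two _ 0 (-1) (by norm_num)
    · intro μ h
      rw [hM4, Matrix.det_fin_two] at h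
      simp [Matrix.algebraMap_matrix_apply] at h
      rcases h with h | h
      · right; have : (μ:ℂ) = -1 := by linear_combination h
        exact_mod_cast this
      · left; exact h
    · rw [hM4]; simp [Matrix.trace_fin_two]
  -- singular values of C
  have hsingC : singDown (Xᴴ * Y) = ![1, 0] := by
    have hd := aux_eigenvalues_two (Matrix.isHermitian_conjTranspose_mul_self (Xᴴ * Y)) 1 0 ?_ ?_
    · apply aux_sortDown_of_vals _ 1 0 (by norm_num)
      rcases hd with ⟨h0, h1⟩ | ⟨h0, h1⟩
      · left; rw [h0, h1]; simp
      · right; rw [h0, h1]; simp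
    · intro μ h
      rw [hCtC, Matrix.det_fin_two] at h
      simp [Matrix.algebraMap_matrix_apply] at h
      rcases h with h | h
      · right; exact h
      · left; have : (μ:ℂ) = 1 := by linear_combination h
        exact_mod_cast this
    · rw [hCtC]; simp [Matrix.trace_fin_two]
  -- principal angles
  have hrev0 : (0 : Fin 2).rev = 1 := by decide
  have hrev1 : (1 : Fin 2).rev = 0 := by decide
  have hang : principalAngles X Y = ![Real.pi / 2, 0] := by
    funext i
    rcases (by decide : ∀ t : Fin 2, t = 0 ∨ t = 1) i with rfl | rfl
    · show Real.arccos (singDown (Xᴴ * Y) (Fin.rev 0)) = _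
      rw [hrev0, hsingC]
      norm_num [Real.arccos_zero]
    · show Real.arccos (singDown (Xᴴ * Y) (Fin.rev 1)) = _
      rw [hrev1, hsingC]
      norm_num [Real.arccos_one]
  -- spread of A
  have hspr : sprA hA = 2 := by
    subst hAdef
    have hblock : ∀ μ : ℝ, algebraMap ℝ (Matrix (Fin 2 ⊕ Fin 2) (Fin 2 ⊕ Fin 2) ℂ) μ
        - Matrix.fromBlocks !![0, 1; 1, 0] 0 0 1
        = Matrix.fromBlocks (algebraMap ℝ (Matrix (Fin 2) (Fin 2) ℂ) μ - !![0, 1; 1, 0]) 0 0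
            (algebraMap ℝ (Matrix (Fin 2) (Fin 2) ℂ) μ - 1) := by
      intro μ
      ext (i | i) (j | j) <;>
        simp [Matrix.algebraMap_matrix_apply, Matrix.one_apply, Matrix.fromBlocks]
    have hmem : ∀ i, hA.eigenvalues i = 1 ∨ hA.eigenvalues i = -1 := by
      intro i
      have h := aux_eig_det_zero hA i
      set μ := hA.eigenvalues i with hμ
      rw [hblock, Matrix.det_fromBlocks_zero₂₁, Matrix.det_fin_two, Matrix.det_fin_two] at h
      simp [Matrix.algebraMap_matrix_apply, Matrix.one_apply] at h
      rcases h with h | h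
      · have h2 : ((μ:ℂ) - 1) * ((μ:ℂ) + 1) = 0 := by linear_combination h
        rcases mul_eq_zero.mp h2 with h3 | h3
        · left; have : (μ:ℂ) = 1 := by linear_combination h3
          exact_mod_cast this
        · right; have : (μ:ℂ) = -1 := by linear_combination h3
          exact_mod_cast this
      · left; have : (μ:ℂ) = 1 := by linear_combination h
        exact_mod_cast this
    have hsum : ∑ i, hA.eigenvalues i = 2 := by
      have h := aux_sum_eig hA
      have htr : ((Matrix.fromBlocks !![0, 1; 1, 0] 0 0 1 :
          Matrix (Fin 2 ⊕ Fin 2) (Fin 2 ⊕ Fin 2) ℂ)).trace = 2 := by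
        simp [Matrix.trace, Matrix.diag, Fintype.sum_sum_type, Fin.sum_univ_two,
          Matrix.fromBlocks, Matrix.one_apply]
      rw [htr] at h
      exact_mod_cast h
    exact aux_sprA_eq_two hA hmem hsum
  -- sorted values needed for majorization
  have hs20 : sortDown ![(2:ℝ), 0] = ![2, 0] :=
    aux_sortDown_of_vals _ 2 0 (by norm_num) (Or.inl ⟨by norm_num, by norm_num⟩)
  have hs01 : sortDown ![(0:ℝ), 1] = ![1, 0] :=
    aux_sortDown_of_vals _ 1 0 (by norm_num) (Or.inr ⟨by norm_num, by norm_num⟩)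
  have hsabs : sortDown (fun i => |(![(1:ℝ), -2]) i|) = ![2, 1] := by
    apply aux_sortDown_of_vals _ 2 1 (by norm_num)
    right
    constructor <;> norm_num
  -- component 7
  have hcomp7 : (fun i => |eigDown (Matrix.isHermitian_conjTranspose_mul_mul X hA) i
      - eigDown (Matrix.isHermitian_conjTranspose_mul_mul Y hA) i|) = ![(0:ℝ), 1] := by
    funext i
    fin_cases i <;> simp [heig1, heigY]
  refine ⟨?_, hang, hspr, ?_, ?_, ?_, hcomp7, ?_⟩
  · -- invariant range
    intro u
    refine ⟨![u 1, u 0], ?_⟩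
    rw [hAdef, hXdef]
    funext i
    rcases i with i | i <;> fin_cases i <;>
      simp [Matrix.mulVec, dotProduct, Fintype.sum_sum_type, Fin.sum_univ_two,
        Matrix.fromBlocks, Matrix.fromRows_apply_inl, Matrix.fromRows_apply_inr, Matrix.one_apply]
  · -- spr * sin^2
    funext i
    rw [hspr, hang]
    fin_cases i <;> simp [Real.sin_pi_div_two]
  · -- the vector a = (1, -2)
    have hinner : sortDown (fun j =>
        eigDown (Matrix.isHermitian_conjTranspose_mul_mul X hA) j
          - eigDown (Matrix.isHermitian_conjTranspose_mul_mul (Xᴴ * Y)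
              (Matrix.isHermitian_conjTranspose_mul_mul X hA)) j) = ![1, -1] := by
      apply aux_sortDown_of_vals _ 1 (-1) (by norm_num)
      left
      constructor
      · show eigDown (Matrix.isHermitian_conjTranspose_mul_mul X hA) 0
            - eigDown (Matrix.isHermitian_conjTranspose_mul_mul (Xᴴ * Y)
                (Matrix.isHermitian_conjTranspose_mul_mul X hA)) 0 = 1
        rw [heig1, heig3]; norm_num
      · show eigDown (Matrix.isHermitian_conjTranspose_mul_mul X hA) 1
            - eigDown (Matrix.isHermitian_conjTranspose_mul_mul (Xᴴ * Y)
                (Matrix.isHermitian_conjTranspose_mul_mul X hA)) 1 = -1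
        rw [heig1, heig3]; norm_num
    funext i
    rcases (by decide : ∀ t : Fin 2, t = 0 ∨ t = 1) i with rfl | rfl <;>
      rw [hinner, heig4] <;> norm_num
  · -- not weakly majorized
    intro hw
    have h2 := hw 2
    rw [aux_psum_two _ le_rfl, aux_psum_two _ le_rfl, hsabs, hs20] at h2
    norm_num at h2
  · -- weak majorization
    rw [hcomp7]
    intro j
    match j with
    | 0 => rw [aux_psum_zero, aux_psum_zero]
    | 1 =>
      rw [aux_psum_one, aux_psum_one, hs01, hs20]
      norm_num
    | (n + 2) =>
      rw [aux_psum_two _ (by omega), aux_psum_two _ (by omega), hs01, hs20]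
      norm_num
end

section
/- Let A ∈ ℂ^{n×n} be Hermitian and let x, y ∈ ℂ^n be unit vectors such that x is an eigenvector of A (i.e., Ax = λx for some λ ∈ ℝ). Then |x^H A x − y^H A y| ≤ spr(A) · sin²θ(x, y), where θ(x, y) = arccos|x^H y| ∈ [0, π/2] is the acute angle between x and y. -/
open Matrix Finset

/-- If `x` is a unit eigenvector of the Hermitian matrix `A`
and `y` is any unit vector, then
`|xᴴ A x - yᴴ A y| ≤ spr(A) * sin² θ(x,y)` where `θ(x,y) = arccos |xᴴ y|`. -/
theorem rayleigh_quotient_eigenvector_bound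
    {n : ℕ} (A : Matrix (Fin n) (Fin n) ℂ) (hA : A.IsHermitian)
    (x y : Fin n → ℂ)
    (hx : dotProduct (star x) x = 1) (hy : dotProduct (star y) y = 1)
    (heig : ∃ l : ℝ, A.mulVec x = (l : ℂ) • x) :
    ‖(dotProduct (star x) (A.mulVec x)
        - dotProduct (star y) (A.mulVec y))‖
      ≤ sprA hA
          * Real.sin (Real.arccos ‖(dotProduct (star x) y)‖) ^ 2 := by
  classical
  obtain ⟨l, hl⟩ := heig
  set U : Matrix (Fin n) (Fin n) ℂ := (hA.eigenvectorUnitary : Matrix (Fin n) (Fin n) ℂ)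
    with hUdef
  have hUU : U * star U = 1 := (Matrix.mem_unitaryGroup_iff).mp hA.eigenvectorUnitary.2
  set e : Fin n → ℝ := hA.eigenvalues with he
  set a : Fin n → ℂ := star U *ᵥ x with hadef
  set b : Fin n → ℂ := star U *ᵥ y with hbdef
  have key : ∀ v w : Fin n → ℂ,
      dotProduct (star (star U *ᵥ v)) (star U *ᵥ w) = dotProduct (star v) w := by
    intro v w
    calc dotProduct (star (star U *ᵥ v)) (star U *ᵥ w)
        = dotProduct (star v ᵥ* U) (star U *ᵥ w) := by
          have hsUH : (star U)ᴴ = U := by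
            rw [Matrix.star_eq_conjTranspose, Matrix.conjTranspose_conjTranspose]
          rw [Matrix.star_mulVec, hsUH]
      _ = dotProduct (star v) (U *ᵥ (star U *ᵥ w)) := (dotProduct_mulVec _ _ _).symm
      _ = dotProduct (star v) w := by
          rw [Matrix.mulVec_mulVec, hUU, Matrix.one_mulVec]
  have hDA : star U * A = Matrix.diagonal ((↑) ∘ e) * star U := by
    have h : star U * A * U = Matrix.diagonal ((↑) ∘ e) := by
      have h0 := hA.conjStarAlgAut_star_eigenvectorUnitary
      rwa [Unitary.conjStarAlgAut_star_apply] at h0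
    calc star U * A = star U * A * (U * star U) := by rw [hUU, mul_one]
      _ = (star U * A * U) * star U := by rw [mul_assoc, mul_assoc, mul_assoc]
      _ = Matrix.diagonal ((↑) ∘ e) * star U := by rw [h]
  have hdiag : ∀ v : Fin n → ℂ, star U *ᵥ (A *ᵥ v) = fun i => (e i : ℂ) * (star U *ᵥ v) i := by
    intro v
    rw [Matrix.mulVec_mulVec, hDA, ← Matrix.mulVec_mulVec]
    funext i
    simp [Matrix.mulVec_diagonal]
  have heiga : ∀ i, (e i : ℂ) * a i = (l : ℂ) * a i := by
    intro i
    have h1 := congrFun (hdiag x) i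
    have h2 : star U *ᵥ (A *ᵥ x) = (l : ℂ) • a := by rw [hl, Matrix.mulVec_smul]
    rw [h2] at h1
    have h3 : (e i : ℂ) * (star U *ᵥ x) i = (l : ℂ) * a i := by simpa using h1.symm
    exact h3
  have hxAx : dotProduct (star x) (A *ᵥ x) = (l : ℂ) := by
    rw [hl, dotProduct_smul, hx, smul_eq_mul, mul_one]
  set α : Fin n → ℝ := fun i => Complex.normSq (a i) with hαdef
  set β : Fin n → ℝ := fun i => Complex.normSq (b i) with hβdef
  have hstarmul : ∀ z : ℂ, star z * z = (Complex.normSq z : ℂ) := by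
    intro z
    rw [Complex.star_def, mul_comm, Complex.mul_conj]
  have hyAy : dotProduct (star y) (A *ᵥ y) = ((∑ i, e i * β i : ℝ) : ℂ) := by
    rw [← key y (A *ᵥ y), hdiag y, ← hbdef]
    simp only [dotProduct, Pi.star_apply]
    rw [Complex.ofReal_sum]
    refine Finset.sum_congr rfl fun i _ => ?_
    rw [show star (b i) * ((e i : ℂ) * b i) = (e i : ℂ) * (star (b i) * b i) by ring,
      hstarmul, hβdef]
    push_cast
    ring
  have hα1 : ∑ i, α i = 1 := by
    have h := key x x
    rw [hx, ← hadef] at h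
    have : dotProduct (star a) a = ((∑ i, α i : ℝ) : ℂ) := by
      simp only [dotProduct, Pi.star_apply, Complex.ofReal_sum]
      exact Finset.sum_congr rfl fun i _ => hstarmul (a i)
    rw [this] at h
    exact_mod_cast h
  have hβ1 : ∑ i, β i = 1 := by
    have h := key y y
    rw [hy, ← hbdef] at h
    have : dotProduct (star b) b = ((∑ i, β i : ℝ) : ℂ) := by
      simp only [dotProduct, Pi.star_apply, Complex.ofReal_sum]
      exact Finset.sum_congr rfl fun i _ => hstarmul (b i)
    rw [this] at h
    exact_mod_cast h
  have hab : dotProduct (star a) b = dotProduct (star x) y := key x y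
  set t : ℝ := ‖(dotProduct (star x) y)‖ with htdef
  set T : Finset (Fin n) := Finset.univ.filter (fun i => a i ≠ 0) with hTdef
  have heT : ∀ i ∈ T, e i = l := by
    intro i hi
    have hai : a i ≠ 0 := (Finset.mem_filter.mp hi).2
    have := mul_right_cancel₀ hai (heiga i)
    exact_mod_cast this
  have hαT : ∑ i ∈ T, α i = 1 := by
    rw [← hα1]
    refine Finset.sum_subset (Finset.subset_univ T) fun i _ hi => ?_
    have : a i = 0 := by
      by_contra h
      exact hi (Finset.mem_filter.mpr ⟨Finset.mem_univ i, h⟩)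
    simp [hαdef, this]
  have hβnn : ∀ i, 0 ≤ β i := fun i => Complex.normSq_nonneg _
  have htT : t ^ 2 ≤ ∑ i ∈ T, β i := by
    have h1 : t ≤ ∑ i ∈ T, ‖a i‖ * ‖b i‖ := by
      rw [htdef, ← hab]
      have h2 : dotProduct (star a) b = ∑ i ∈ T, star (a i) * b i := by
        rw [dotProduct]
        refine (Finset.sum_subset (Finset.subset_univ T) fun i _ hi => ?_).symm
        have : a i = 0 := by
          by_contra h
          exact hi (Finset.mem_filter.mpr ⟨Finset.mem_univ i, h⟩)
        simp [this]
      rw [h2]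
      refine le_trans (norm_sum_le _ _) (le_of_eq ?_)
      refine Finset.sum_congr rfl fun i _ => ?_
      simp
    have h3 : (∑ i ∈ T, ‖a i‖ * ‖b i‖) ^ 2
        ≤ (∑ i ∈ T, ‖a i‖ ^ 2) * (∑ i ∈ T, ‖b i‖ ^ 2) :=
      Finset.sum_mul_sq_le_sq_mul_sq _ _ _
    have h4 : (∑ i ∈ T, ‖a i‖ ^ 2) = 1 := by
      rw [← hαT]
      exact Finset.sum_congr rfl fun i _ => Complex.sq_norm _
    have h5 : (∑ i ∈ T, ‖b i‖ ^ 2) = ∑ i ∈ T, β i := by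
      exact Finset.sum_congr rfl fun i _ => Complex.sq_norm _
    have ht0 : 0 ≤ t := norm_nonneg _
    calc t ^ 2 ≤ (∑ i ∈ T, ‖a i‖ * ‖b i‖) ^ 2 := by
          apply pow_le_pow_left₀ ht0 h1
      _ ≤ 1 * (∑ i ∈ T, β i) := by rw [← h4, ← h5]; exact h3
      _ = ∑ i ∈ T, β i := one_mul _
  have hTβle : ∑ i ∈ T, β i ≤ 1 := by
    rw [← hβ1]
    exact Finset.sum_le_sum_of_subset_of_nonneg (Finset.subset_univ T) fun i _ _ => hβnn i
  have ht1 : t ^ 2 ≤ 1 := le_trans htT hTβle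
  -- T is nonempty, so l is an eigenvalue
  have hTne : T.Nonempty := by
    by_contra h
    rw [Finset.not_nonempty_iff_eq_empty] at h
    rw [h, Finset.sum_empty] at hαT
    norm_num at hαT
  obtain ⟨i0, hi0⟩ := hTne
  have hl0 : l = e i0 := (heT i0 hi0).symm
  have hbdd : BddAbove (Set.range e) := (Set.finite_range e).bddAbove
  have hbddb : BddBelow (Set.range e) := (Set.finite_range e).bddBelow
  have hle : ∀ i, e i ≤ sSup (Set.range e) := fun i => le_csSup hbdd ⟨i, rfl⟩
  have hge : ∀ i, sInf (Set.range e) ≤ e i := fun i => csInf_le hbddb ⟨i, rfl⟩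
  have hsprA : sprA hA = sSup (Set.range e) - sInf (Set.range e) := rfl
  have hsprnn : 0 ≤ sprA hA := by
    rw [hsprA]
    have := hle i0
    have := hge i0
    linarith
  have habs : ∀ i, |l - e i| ≤ sprA hA := by
    intro i
    rw [hsprA, hl0]
    have h1 := hle i
    have h2 := hge i
    have h3 := hle i0
    have h4 := hge i0
    rw [abs_le]
    constructor <;> linarith
  -- main computation
  set S : Finset (Fin n) := Finset.univ.filter (fun i => ¬ a i ≠ 0) with hSdef
  have hsplit : ∑ i ∈ T, β i + ∑ i ∈ S, β i = 1 := by
    rw [hTdef, hSdef, Finset.sum_filter_add_sum_filter_not, hβ1]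
  have hSβ : ∑ i ∈ S, β i ≤ 1 - t ^ 2 := by linarith
  have hmain : l - ∑ i, e i * β i = ∑ i ∈ S, (l - e i) * β i := by
    have h1 : ∑ i, (l - e i) * β i = l * ∑ i, β i - ∑ i, e i * β i := by
      rw [Finset.mul_sum, ← Finset.sum_sub_distrib]
      exact Finset.sum_congr rfl fun i _ => by ring
    have h2 : ∑ i, (l - e i) * β i = ∑ i ∈ T, (l - e i) * β i + ∑ i ∈ S, (l - e i) * β i := by
      rw [hTdef, hSdef, Finset.sum_filter_add_sum_filter_not]
    have h3 : ∑ i ∈ T, (l - e i) * β i = 0 :=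
      Finset.sum_eq_zero fun i hi => by rw [heT i hi]; ring
    rw [hβ1, mul_one] at h1
    linarith
  have hgoal2 : |l - ∑ i, e i * β i| ≤ sprA hA * (1 - t ^ 2) := by
    rw [hmain]
    calc |∑ i ∈ S, (l - e i) * β i| ≤ ∑ i ∈ S, |(l - e i) * β i| :=
          Finset.abs_sum_le_sum_abs _ _
      _ ≤ ∑ i ∈ S, sprA hA * β i := by
          refine Finset.sum_le_sum fun i _ => ?_
          rw [abs_mul, abs_of_nonneg (hβnn i)]
          exact mul_le_mul_of_nonneg_right (habs i) (hβnn i)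
      _ = sprA hA * ∑ i ∈ S, β i := (Finset.mul_sum _ _ _).symm
      _ ≤ sprA hA * (1 - t ^ 2) := mul_le_mul_of_nonneg_left hSβ hsprnn
  rw [hxAx, hyAy]
  have hsin : Real.sin (Real.arccos t) ^ 2 = 1 - t ^ 2 := by
    rw [Real.sin_arccos, Real.sq_sqrt (by linarith)]
  rw [hsin]
  have hcast : (l : ℂ) - ((∑ i, e i * β i : ℝ) : ℂ) = ((l - ∑ i, e i * β i : ℝ) : ℂ) := by
    push_cast; ring
  rw [hcast, Complex.norm_real, Real.norm_eq_abs]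
  exact hgoal2
end
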